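/- arXiv:1109.3656 — 9 statements merged into one kernel-verified Lean document; each statement's English description precedes it below -/
import Mathlib

section
/- Let n ≥ 1, let w ∈ R^n be a column vector, and let i ≠ j be two indices in {1,…,n}. Then there exists a unimodular matrix E ∈ R^{n×n} that agrees with the identity matrix except possibly in the four entries in positions (i,i), (i,j), (j,i), (j,j), such that the vector u = E·w satisfies: u_j = 0, u_k = w_k for all k ∉ {i,j}, and the left ideal R·u_i equals the left ideal R·w_i + R·w_j (i.e. u_i is a greatest common right divisor of w_i and w_j). -/
lemma span_pair_zero {R : Type*} [Ring R] (a : R) :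
    (Submodule.span R {a, (0:R)} : Submodule R R) = Submodule.span R {a} := by
  rw [show ({a, (0:R)} : Set R) = insert a {0} from rfl, Submodule.span_insert,
    Submodule.span_zero_singleton, sup_bot_eq]

lemma core_lemma {R : Type*} [Ring R] (degD : R → WithBot ℕ)
    (hbot : ∀ r : R, degD r = ⊥ ↔ r = 0)
    (hdivision : ∀ f g : R, g ≠ 0 → ∃ q rem : R, f = q * g + rem ∧ degD rem < degD g) :
    ∀ N : ℕ, ∀ a b : R, degD b < (N : WithBot ℕ) →
    ∃ e11 e12 e21 e22 f11 f12 f21 f22 : R,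
      e11*f11 + e12*f21 = 1 ∧ e11*f12 + e12*f22 = 0 ∧
      e21*f11 + e22*f21 = 0 ∧ e21*f12 + e22*f22 = 1 ∧
      f11*e11 + f12*e21 = 1 ∧ f11*e12 + f12*e22 = 0 ∧
      f21*e11 + f22*e21 = 0 ∧ f21*e12 + f22*e22 = 1 ∧
      e21*a + e22*b = 0 ∧
      Submodule.span R {e11*a + e12*b} = Submodule.span R {a, b} := by
  have idsol : ∀ a : R, ∃ e11 e12 e21 e22 f11 f12 f21 f22 : R,
      e11*f11 + e12*f21 = 1 ∧ e11*f12 + e12*f22 = 0 ∧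
      e21*f11 + e22*f21 = 0 ∧ e21*f12 + e22*f22 = 1 ∧
      f11*e11 + f12*e21 = 1 ∧ f11*e12 + f12*e22 = 0 ∧
      f21*e11 + f22*e21 = 0 ∧ f21*e12 + f22*e22 = 1 ∧
      e21*a + e22*(0:R) = 0 ∧
      Submodule.span R {e11*a + e12*(0:R)} = Submodule.span R {a, (0:R)} := by
    intro a
    refine ⟨1,0,0,1,1,0,0,1, by simp, by simp, by simp, by simp, by simp, by simp,
      by simp, by simp, by simp, ?_⟩
    rw [span_pair_zero]
    norm_num
  intro N
  induction N with
  | zero =>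
    intro a b hlt
    have hb : b = 0 := by
      rw [← hbot]
      exact Nat.WithBot.lt_zero_iff.mp (by exact_mod_cast hlt)
    subst hb; exact idsol a
  | succ N ih =>
    intro a b hlt
    by_cases hb : b = 0
    · subst hb; exact idsol a
    · obtain ⟨q, r, hA, hr⟩ := hdivision a b hb
      have hbN : degD b ≤ (N : WithBot ℕ) := by
        have hdb : degD b ≠ ⊥ := fun h => hb ((hbot b).mp h)
        obtain ⟨d, hd⟩ := WithBot.ne_bot_iff_exists.mp hdb
        rw [← hd] at hlt ⊢
        exact Nat.cast_le.mpr (Nat.lt_succ_iff.mp (Nat.cast_lt.mp hlt))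
      obtain ⟨e11, e12, e21, e22, f11, f12, f21, f22,
        h1, h2, h3, h4, h5, h6, h7, h8, h9, h10⟩ := ih b r (lt_of_lt_of_le hr hbN)
      refine ⟨e12, e11 - e12*q, e22, e21 - e22*q,
        q*f11 + f21, q*f12 + f22, f11, f12, ?_, ?_, ?_, ?_, ?_, ?_, ?_, ?_, ?_, ?_⟩
      · calc e12*(q*f11 + f21) + (e11 - e12*q)*f11 = e11*f11 + e12*f21 := by noncomm_ring
        _ = 1 := h1
      · calc e12*(q*f12 + f22) + (e11 - e12*q)*f12 = e11*f12 + e12*f22 := by noncomm_ring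
        _ = 0 := h2
      · calc e22*(q*f11 + f21) + (e21 - e22*q)*f11 = e21*f11 + e22*f21 := by noncomm_ring
        _ = 0 := h3
      · calc e22*(q*f12 + f22) + (e21 - e22*q)*f12 = e21*f12 + e22*f22 := by noncomm_ring
        _ = 1 := h4
      · calc (q*f11 + f21)*e12 + (q*f12 + f22)*e22
            = q*(f11*e12 + f12*e22) + (f21*e12 + f22*e22) := by noncomm_ring
        _ = q*0 + 1 := by rw [h6, h8]
        _ = 1 := by simp
      · calc (q*f11 + f21)*(e11 - e12*q) + (q*f12 + f22)*(e21 - e22*q)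
            = q*(f11*e11 + f12*e21) + (f21*e11 + f22*e21)
              - q*(f11*e12 + f12*e22)*q - (f21*e12 + f22*e22)*q := by noncomm_ring
        _ = q*1 + 0 - q*0*q - 1*q := by rw [h5, h6, h7, h8]
        _ = 0 := by simp
      · exact h6
      · calc f11*(e11 - e12*q) + f12*(e21 - e22*q)
            = (f11*e11 + f12*e21) - (f11*e12 + f12*e22)*q := by noncomm_ring
        _ = 1 - 0*q := by rw [h5, h6]
        _ = 1 := by simp
      · calc e22*a + (e21 - e22*q)*b = e21*b + e22*(a - q*b) := by noncomm_ring
        _ = e21*b + e22*r := by rw [show a - q*b = r by rw [hA]; noncomm_ring]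
        _ = 0 := h9
      · have key : e12*a + (e11 - e12*q)*b = e11*b + e12*r := by
          rw [hA]; noncomm_ring
        rw [key, h10]
        apply le_antisymm
        · rw [Submodule.span_le, Set.insert_subset_iff, Set.singleton_subset_iff]
          constructor
          · exact Submodule.subset_span (by simp)
          · rw [SetLike.mem_coe, Submodule.mem_span_pair]
            exact ⟨1, -q, by simp only [smul_eq_mul]; rw [hA]; noncomm_ring⟩
        · rw [Submodule.span_le, Set.insert_subset_iff, Set.singleton_subset_iff]
          constructor
          · rw [SetLike.mem_coe, Submodule.mem_span_pair]
            exact ⟨q, 1, by simp only [smul_eq_mul]; rw [hA]; noncomm_ring⟩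
          · exact Submodule.subset_span (by simp)

lemma sum_two_aux {R : Type*} [Ring R] {n : ℕ} {i j : Fin n} (hij : i ≠ j) (a b : R)
    (c : Fin n → R) :
    ∑ m, (if m = i then a else if m = j then b else 0) * c m = a * c i + b * c j := by
  have h : ∀ m : Fin n, (if m = i then a else if m = j then b else 0) * c m
      = (if m = i then a * c m else 0) + (if m = j then b * c m else 0) := by
    intro m
    by_cases h1 : m = i
    · subst h1; simp [hij]
    · by_cases h2 : m = j <;> simp [h1, h2, hij.symm]
  simp only [h, Finset.sum_add_distrib, Finset.sum_ite_eq' Finset.univ, Finset.mem_univ,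
    if_true]

lemma sum_delta_aux {R : Type*} [Ring R] {n : ℕ} (k : Fin n) (c : Fin n → R) :
    ∑ m, (if k = m then (1:R) else 0) * c m = c k := by
  simp [ite_mul]



/-- Over a ring `R` (not necessarily commutative, no zero
divisors, nontrivial) equipped with a degree function `degD : R → WithBot ℕ`
satisfying the usual axioms, such that every degree-0 element is a unit and
right division with remainder is available:  given `w ∈ R^n` and indices
`i ≠ j`, there is a unimodular matrix `E` agreeing with the identity outside
the four positions `(i,i), (i,j), (j,i), (j,j)` such that `u = E ⬝ w`
satisfies `u j = 0`, `u k = w k` for `k ∉ {i,j}`, and the left ideal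
`R·(u i)` equals the left ideal `R·(w i) + R·(w j)`. -/
theorem stmt0
    {R : Type*} [Ring R] [Nontrivial R] [NoZeroDivisors R]
    (degD : R → WithBot ℕ)
    (hbot : ∀ r : R, degD r = ⊥ ↔ r = 0)
    (hmul : ∀ r s : R, degD (r * s) = degD r + degD s)
    (hadd : ∀ r s : R, degD (r + s) ≤ max (degD r) (degD s))
    (hunit : ∀ r : R, degD r = 0 → IsUnit r)
    (hdivision : ∀ f g : R, g ≠ 0 → ∃ q rem : R, f = q * g + rem ∧ degD rem < degD g)
    {n : ℕ} (hn : 1 ≤ n) (w : Fin n → R) (i j : Fin n) (hij : i ≠ j) :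
    ∃ E : Matrix (Fin n) (Fin n) R,
      (∃ V : Matrix (Fin n) (Fin n) R, E * V = 1 ∧ V * E = 1) ∧
      (∀ k l : Fin n, ¬ ((k = i ∨ k = j) ∧ (l = i ∨ l = j)) →
        E k l = (1 : Matrix (Fin n) (Fin n) R) k l) ∧
      (E.mulVec w) j = 0 ∧
      (∀ k : Fin n, k ≠ i → k ≠ j → (E.mulVec w) k = w k) ∧
      (Submodule.span R {(E.mulVec w) i} : Submodule R R) =
        Submodule.span R {w i, w j} := by
  obtain ⟨N, hN⟩ : ∃ N : ℕ, degD (w j) < (N : WithBot ℕ) := by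
    cases h : degD (w j) with
    | bot => exact ⟨1, by rw [Nat.cast_withBot]; exact WithBot.bot_lt_coe 1⟩
    | coe d => exact ⟨d + 1, by rw [Nat.cast_withBot]; exact WithBot.coe_lt_coe.mpr (Nat.lt_succ_self d)⟩
  obtain ⟨e11, e12, e21, e22, f11, f12, f21, f22,
    h1, h2, h3, h4, h5, h6, h7, h8, h9, h10⟩ :=
    core_lemma degD hbot hdivision N (w i) (w j) hN
  set E : Matrix (Fin n) (Fin n) R := Matrix.of fun k l =>
    if k = i then (if l = i then e11 else if l = j then e12 else 0)
    else if k = j then (if l = i then e21 else if l = j then e22 else 0)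
    else if k = l then 1 else 0 with hE
  set V : Matrix (Fin n) (Fin n) R := Matrix.of fun k l =>
    if k = i then (if l = i then f11 else if l = j then f12 else 0)
    else if k = j then (if l = i then f21 else if l = j then f22 else 0)
    else if k = l then 1 else 0 with hV
  have hrowE_i : ∀ m, E i m = (if m = i then e11 else if m = j then e12 else 0) := by
    intro m; simp [hE, Matrix.of_apply]
  have hrowE_j : ∀ m, E j m = (if m = i then e21 else if m = j then e22 else 0) := by
    intro m; simp [hE, Matrix.of_apply, hij.symm]
  have hrowE_k : ∀ k, k ≠ i → k ≠ j → ∀ m, E k m = (if k = m then (1:R) else 0) := by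
    intro k hki hkj m; simp [hE, Matrix.of_apply, hki, hkj]
  have hrowV_i : ∀ m, V i m = (if m = i then f11 else if m = j then f12 else 0) := by
    intro m; simp [hV, Matrix.of_apply]
  have hrowV_j : ∀ m, V j m = (if m = i then f21 else if m = j then f22 else 0) := by
    intro m; simp [hV, Matrix.of_apply, hij.symm]
  have hrowV_k : ∀ k, k ≠ i → k ≠ j → ∀ m, V k m = (if k = m then (1:R) else 0) := by
    intro k hki hkj m; simp [hV, Matrix.of_apply, hki, hkj]
  refine ⟨E, ⟨V, ?_, ?_⟩, ?_, ?_, ?_, ?_⟩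
  · -- E * V = 1
    ext k l
    rw [Matrix.mul_apply]
    by_cases hki : i = k
    · subst hki
      simp only [hrowE_i]
      rw [sum_two_aux hij, hrowV_i, hrowV_j]
      by_cases hli : i = l
      · subst hli; simp [hij.symm, h1, Matrix.one_apply]
      · by_cases hlj : j = l
        · subst hlj; simp [hij, hij.symm, h2, Matrix.one_apply]
        · simp [Ne.symm hli, Ne.symm hlj, Matrix.one_apply, hli]
    · by_cases hkj : j = k
      · subst hkj
        simp only [hrowE_j]
        rw [sum_two_aux hij, hrowV_i, hrowV_j]
        by_cases hli : i = l
        · subst hli; simp [hij.symm, h3, Matrix.one_apply]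
        · by_cases hlj : j = l
          · subst hlj; simp [hij, hij.symm, h4, Matrix.one_apply]
          · simp [Ne.symm hli, Ne.symm hlj, Matrix.one_apply, hlj]
      · simp only [hrowE_k k (Ne.symm hki) (Ne.symm hkj)]
        rw [sum_delta_aux, hrowV_k k (Ne.symm hki) (Ne.symm hkj), Matrix.one_apply]
  · -- V * E = 1
    ext k l
    rw [Matrix.mul_apply]
    by_cases hki : i = k
    · subst hki
      simp only [hrowV_i]
      rw [sum_two_aux hij, hrowE_i, hrowE_j]
      by_cases hli : i = l
      · subst hli; simp [hij.symm, h5, Matrix.one_apply]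
      · by_cases hlj : j = l
        · subst hlj; simp [hij, hij.symm, h6, Matrix.one_apply]
        · simp [Ne.symm hli, Ne.symm hlj, Matrix.one_apply, hli]
    · by_cases hkj : j = k
      · subst hkj
        simp only [hrowV_j]
        rw [sum_two_aux hij, hrowE_i, hrowE_j]
        by_cases hli : i = l
        · subst hli; simp [hij.symm, h7, Matrix.one_apply]
        · by_cases hlj : j = l
          · subst hlj; simp [hij, hij.symm, h8, Matrix.one_apply]
          · simp [Ne.symm hli, Ne.symm hlj, Matrix.one_apply, hlj]
      · simp only [hrowV_k k (Ne.symm hki) (Ne.symm hkj)]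
        rw [sum_delta_aux, hrowE_k k (Ne.symm hki) (Ne.symm hkj), Matrix.one_apply]
  · -- identity outside the four positions
    intro k l hkl
    push_neg at hkl
    by_cases hki : i = k
    · subst hki
      obtain ⟨hli, hlj⟩ := hkl (Or.inl rfl)
      rw [hrowE_i, Matrix.one_apply]
      simp [hli, hlj, Ne.symm hli]
    · by_cases hkj : j = k
      · subst hkj
        obtain ⟨hli, hlj⟩ := hkl (Or.inr rfl)
        rw [hrowE_j, Matrix.one_apply]
        simp [hli, hlj, Ne.symm hlj]
      · rw [hrowE_k k (Ne.symm hki) (Ne.symm hkj), Matrix.one_apply]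
  · -- u j = 0
    rw [Matrix.mulVec, dotProduct]
    simp only [hrowE_j]
    rw [sum_two_aux hij]
    exact h9
  · -- u k = w k for k outside {i, j}
    intro k hki hkj
    rw [Matrix.mulVec, dotProduct]
    simp only [hrowE_k k hki hkj]
    rw [sum_delta_aux]
  · -- span condition
    rw [Matrix.mulVec, dotProduct]
    simp only [hrowE_i]
    rw [sum_two_aux hij]
    exact h10
end

section
/- Let J ∈ R^{n×n} be upper triangular with all diagonal entries nonzero. Then there exists a unimodular matrix P ∈ R^{n×n} that is upper triangular with all diagonal entries equal to 1, such that (P·J)_{jj} = J_{jj} for every j, and degD (P·J)_{ij} < degD J_{jj} whenever i < j; that is, in every column of P·J the diagonal entry has degree strictly larger than the degrees of all entries above it. -/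
lemma ut_mul_aux {R : Type*} [Ring R] {n : ℕ}
    (A B : Matrix (Fin n) (Fin n) R)
    (hA : ∀ i j : Fin n, j < i → A i j = 0)
    (hB : ∀ i j : Fin n, j < i → B i j = 0) :
    (∀ i j : Fin n, j < i → (A * B) i j = 0) ∧
    (∀ i : Fin n, (A * B) i i = A i i * B i i) := by
  constructor
  · intro i j hji
    simp only [Matrix.mul_apply]
    apply Finset.sum_eq_zero
    intro k _
    rcases lt_or_ge k i with h | h
    · rw [hA i k h, zero_mul]
    · rw [hB k j (lt_of_lt_of_le hji h), mul_zero]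
  · intro i
    simp only [Matrix.mul_apply]
    rw [Finset.sum_eq_single i]
    · intro k _ hk
      rcases hk.lt_or_gt with h | h
      · rw [hA i k h, zero_mul]
      · rw [hB k i h, mul_zero]
    · simp

/-- Let `J ∈ R^{n×n}` be upper triangular with nonzero
diagonal entries.  Then there is a unimodular matrix `P`, upper triangular
with diagonal entries `1`, such that `P * J` has the same diagonal as `J`
and in every column the degree of the diagonal entry strictly dominates the
degrees of the entries above it. -/
theorem stmt1
    {R : Type*} [Ring R] [Nontrivial R] [NoZeroDivisors R]
    (degD : R → WithBot ℕ)
    (hbot : ∀ r : R, degD r = ⊥ ↔ r = 0)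
    (hmul : ∀ r s : R, degD (r * s) = degD r + degD s)
    (hadd : ∀ r s : R, degD (r + s) ≤ max (degD r) (degD s))
    (hunit : ∀ r : R, degD r = 0 → IsUnit r)
    (hdivision : ∀ f g : R, g ≠ 0 → ∃ q rem : R, f = q * g + rem ∧ degD rem < degD g)
    {n : ℕ} (J : Matrix (Fin n) (Fin n) R)
    (hJut : ∀ i j : Fin n, j < i → J i j = 0)
    (hJdiag : ∀ i : Fin n, J i i ≠ 0) :
    ∃ P : Matrix (Fin n) (Fin n) R,
      (∃ V : Matrix (Fin n) (Fin n) R, P * V = 1 ∧ V * P = 1) ∧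
      (∀ i j : Fin n, j < i → P i j = 0) ∧
      (∀ i : Fin n, P i i = 1) ∧
      (∀ j : Fin n, (P * J) j j = J j j) ∧
      (∀ i j : Fin n, i < j → degD ((P * J) i j) < degD (J j j)) := by
  have key : ∀ m : ℕ, m ≤ n → ∃ P : Matrix (Fin n) (Fin n) R,
      (∃ V : Matrix (Fin n) (Fin n) R, P * V = 1 ∧ V * P = 1) ∧
      (∀ i j : Fin n, j < i → P i j = 0) ∧
      (∀ i : Fin n, P i i = 1) ∧
      (∀ i c : Fin n, i < c → (c : ℕ) < m → degD ((P * J) i c) < degD (J c c)) := by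
    intro m
    induction m with
    | zero =>
      intro _
      refine ⟨1, ⟨1, by simp, by simp⟩, ?_, fun i => Matrix.one_apply_eq i, ?_⟩
      · intro i k h; exact Matrix.one_apply_ne h.ne'
      · intro _ c _ hc; exact absurd hc (Nat.not_lt_zero _)
    | succ m ih =>
      intro hm
      obtain ⟨P, ⟨V, hPV, hVP⟩, hPlow, hPdiag, hPdeg⟩ := ih (Nat.le_of_succ_le hm)
      set j : Fin n := ⟨m, hm⟩ with hj
      set A : Matrix (Fin n) (Fin n) R := P * J with hA
      obtain ⟨hAut0, hAdiag0⟩ := ut_mul_aux P J hPlow hJut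
      have hAut : ∀ a b : Fin n, b < a → A a b = 0 := hAut0
      have hAdiag : ∀ a : Fin n, A a a = P a a * J a a := hAdiag0
      have hAjj : A j j = J j j := by rw [hAdiag j, hPdiag, one_mul]
      have hqr : ∀ i : Fin n, ∃ q r : R,
          (i < j → (A i j = q * J j j + r ∧ degD r < degD (J j j))) := by
        intro i
        by_cases h : i < j
        · obtain ⟨q, r, h1, h2⟩ := hdivision (A i j) (J j j) (hJdiag j)
          exact ⟨q, r, fun _ => ⟨h1, h2⟩⟩
        · exact ⟨0, 0, fun h' => absurd h' h⟩
      choose q r hqr using hqr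
      set N : Matrix (Fin n) (Fin n) R :=
        Matrix.of (fun a b => if a < j ∧ b = j then -(q a) else 0) with hN
      have hNapp : ∀ a b, N a b = if a < j ∧ b = j then -(q a) else 0 := fun a b => rfl
      have hNN : N * N = 0 := by
        ext a c
        simp only [Matrix.mul_apply, Matrix.zero_apply]
        apply Finset.sum_eq_zero
        intro b _
        by_cases hb : b = j
        · rw [hb, hNapp j c]
          simp [lt_irrefl]
        · rw [hNapp a b]
          simp [hb]
      set Q : Matrix (Fin n) (Fin n) R := 1 + N with hQ
      have hQ1 : Q * (1 - N) = 1 := by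
        have : Q * (1 - N) = 1 - N * N := by rw [hQ]; noncomm_ring
        rw [this, hNN, sub_zero]
      have hQ2 : (1 - N) * Q = 1 := by
        have : (1 - N) * Q = 1 - N * N := by rw [hQ]; noncomm_ring
        rw [this, hNN, sub_zero]
      have hNA : ∀ a c, (N * A) a c = if a < j then -(q a) * A j c else 0 := by
        intro a c
        rw [Matrix.mul_apply, Finset.sum_eq_single j (fun b _ hb => by
          rw [hNapp a b]; simp [hb]) (by simp), hNapp a j]
        by_cases h : a < j <;> simp [h]
      have hQA : ∀ a c, (Q * A) a c = A a c + (if a < j then -(q a) * A j c else 0) := by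
        intro a c
        rw [hQ, Matrix.add_mul, Matrix.one_mul, Matrix.add_apply, hNA]
      have hQlow : ∀ i k : Fin n, k < i → Q i k = 0 := by
        intro i k h
        rw [hQ, Matrix.add_apply, Matrix.one_apply_ne h.ne', hNapp]
        have : ¬(i < j ∧ k = j) := by
          rintro ⟨h1, h2⟩; subst h2; exact absurd (h.trans h1) (lt_irrefl _)
        simp [this]
      have hQdiag : ∀ i : Fin n, Q i i = 1 := by
        intro i
        rw [hQ, Matrix.add_apply, Matrix.one_apply_eq, hNapp]
        have : ¬(i < j ∧ i = j) := by rintro ⟨h1, h2⟩; subst h2; exact absurd h1 (lt_irrefl _)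
        simp [this]
      obtain ⟨hQPlow, hQPdiag⟩ := ut_mul_aux Q P hQlow hPlow
      refine ⟨Q * P, ⟨V * (1 - N), ?_, ?_⟩, hQPlow, ?_, ?_⟩
      · calc Q * P * (V * (1 - N)) = Q * (P * V) * (1 - N) := by
              rw [Matrix.mul_assoc, Matrix.mul_assoc, Matrix.mul_assoc]
          _ = 1 := by rw [hPV, Matrix.mul_one, hQ1]
      · calc V * (1 - N) * (Q * P) = V * ((1 - N) * Q) * P := by
              rw [Matrix.mul_assoc, Matrix.mul_assoc, Matrix.mul_assoc]
          _ = 1 := by rw [hQ2, Matrix.mul_one, hVP]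
      · intro i
        rw [hQPdiag i, hQdiag, hPdiag, one_mul]
      · intro i c hic hcm
        have hQPJ : (Q * P * J) i c = (Q * A) i c := by rw [Matrix.mul_assoc, hA]
        rw [hQPJ, hQA]
        rcases Nat.lt_succ_iff_lt_or_eq.mp hcm with hc | hc
        · have hcj : c < j := hc
          rw [hAut j c hcj]
          simp only [mul_zero, ite_self, add_zero]
          exact hPdeg i c hic hc
        · have hcj : c = j := Fin.ext hc
          rw [hcj]
          have hij : i < j := hcj ▸ hic
          obtain ⟨heq, hdeg⟩ := hqr i hij
          rw [if_pos hij, hAjj, heq, neg_mul]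
          have hr : q i * J j j + r i + -(q i * J j j) = r i := by abel
          rw [hr]
          exact hdeg
  obtain ⟨P, hU, hlow, hdiag, hdeg⟩ := key n le_rfl
  obtain ⟨_, hPJdiag⟩ := ut_mul_aux P J hlow hJut
  exact ⟨P, hU, hlow, hdiag,
    fun c => by rw [hPJdiag c, hdiag, one_mul],
    fun i c h => hdeg i c h c.isLt⟩
end

section
/- Let A ∈ R^{n×n} have full left row rank. Then there exist a unimodular matrix U ∈ R^{n×n} and a matrix H ∈ R^{n×n} in Hermite form such that U·A = H. -/
open Matrix

section Helpers

variable {R : Type*} [Ring R]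

/-- A matrix is unimodular if it has a two-sided inverse. -/
def Unimod {m : Type*} [Fintype m] [DecidableEq m] (U : Matrix m m R) : Prop :=
  ∃ V : Matrix m m R, U * V = 1 ∧ V * U = 1

lemma unimod_one {m : Type*} [Fintype m] [DecidableEq m] :
    Unimod (1 : Matrix m m R) := ⟨1, by simp, by simp⟩

lemma Unimod.mul {m : Type*} [Fintype m] [DecidableEq m]
    {U W : Matrix m m R} (hU : Unimod U) (hW : Unimod W) : Unimod (U * W) := by
  obtain ⟨V, hV1, hV2⟩ := hU
  obtain ⟨X, hX1, hX2⟩ := hW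
  refine ⟨X * V, ?_, ?_⟩
  · calc U * W * (X * V) = U * (W * X) * V := by noncomm_ring
    _ = 1 := by rw [hX1]; simp [hV1]
  · calc X * V * (U * W) = X * (V * U) * W := by noncomm_ring
    _ = 1 := by rw [hV2]; simp [hX2]

/-- Elementary matrix `1 + c E_{i j}` is unimodular when `i ≠ j`. -/
lemma unimod_elem {m : Type*} [Fintype m] [DecidableEq m]
    {i j : m} (hij : i ≠ j) (c : R) :
    Unimod (1 + Matrix.single i j c) := by
  refine ⟨1 - Matrix.single i j c, ?_, ?_⟩ <;>
  · have hsq : Matrix.single i j c * Matrix.single i j c = 0 := by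
      ext a b
      simp [Matrix.mul_apply, Matrix.single, ite_and]
      intro h; subst h
      simp [Finset.sum_ite_eq, hij.symm]
    noncomm_ring
    rw [hsq]  -- might not match; adjust
    abel

lemma elem_mulVec {m : Type*} [Fintype m] [DecidableEq m]
    {i j : m} (c : R) (v : m → R) (k : m) :
    ((1 + Matrix.single i j c) *ᵥ v) k = v k + if k = i then c * v j else 0 := by
  have : (Matrix.single i j c *ᵥ v) k = if k = i then c * v j else 0 := by
    simp only [Matrix.mulVec, dotProduct, Matrix.single, Matrix.of_apply, ite_and,
      boole_mul, ite_mul, zero_mul]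
    by_cases h : k = i
    · simp [h, eq_comm, Finset.sum_ite_eq]
    · rw [if_neg h]
      have h2 : ¬ i = k := fun a => h a.symm
      simp [h2]
  simp [Matrix.add_mulVec, Matrix.one_mulVec, this]

/-- Permutation matrix. -/
def permMat {m : Type*} [Fintype m] [DecidableEq m] (σ : Equiv.Perm m) : Matrix m m R :=
  Matrix.of fun i j => if σ i = j then 1 else 0

lemma permMat_mul {m : Type*} [Fintype m] [DecidableEq m] (σ τ : Equiv.Perm m) :
    (permMat σ : Matrix m m R) * permMat τ = permMat (τ * σ) := by
  ext i j
  simp only [permMat, Matrix.mul_apply, Matrix.of_apply]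
  rw [Finset.sum_eq_single (σ i)]
  · simp; congr
  · intro b _ hb
    have : ¬ σ i = b := fun a => hb a.symm
    simp [this]
  · simp

lemma permMat_one {m : Type*} [Fintype m] [DecidableEq m] :
    (permMat 1 : Matrix m m R) = 1 := by
  ext i j
  simp [permMat, Matrix.one_apply]; congr

lemma unimod_permMat {m : Type*} [Fintype m] [DecidableEq m] (σ : Equiv.Perm m) :
    Unimod (permMat σ : Matrix m m R) := by
  refine ⟨permMat σ⁻¹, ?_, ?_⟩ <;> rw [permMat_mul] <;> simp [permMat_one]

lemma permMat_mulVec {m : Type*} [Fintype m] [DecidableEq m] (σ : Equiv.Perm m)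
    (v : m → R) (i : m) : ((permMat σ : Matrix m m R) *ᵥ v) i = v (σ i) := by
  simp [permMat, Matrix.mulVec, dotProduct, Finset.sum_ite_eq]

end Helpers

section Lifts

variable {R : Type*} [Ring R] {n : ℕ}

/-- `[[1,0],[0,U]]` -/
def liftSucc (U : Matrix (Fin n) (Fin n) R) : Matrix (Fin (n+1)) (Fin (n+1)) R :=
  Matrix.of (Fin.cases (Fin.cons 1 0) (fun i' => Fin.cons 0 (U i')))

@[simp] lemma liftSucc_zero_zero (U : Matrix (Fin n) (Fin n) R) :
    liftSucc U 0 0 = 1 := rfl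
@[simp] lemma liftSucc_zero_succ (U : Matrix (Fin n) (Fin n) R) (j : Fin n) :
    liftSucc U 0 j.succ = 0 := by simp [liftSucc]
@[simp] lemma liftSucc_succ_zero (U : Matrix (Fin n) (Fin n) R) (i : Fin n) :
    liftSucc U i.succ 0 = 0 := by simp [liftSucc]
@[simp] lemma liftSucc_succ_succ (U : Matrix (Fin n) (Fin n) R) (i j : Fin n) :
    liftSucc U i.succ j.succ = U i j := by simp [liftSucc]

lemma liftSucc_one : liftSucc (1 : Matrix (Fin n) (Fin n) R) = 1 := by
  ext i j
  induction i using Fin.cases with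
  | zero => induction j using Fin.cases with
    | zero => simp
    | succ j' => simp [Matrix.one_apply, (Fin.succ_ne_zero j').symm]
  | succ i' => induction j using Fin.cases with
    | zero => simp [Matrix.one_apply, Fin.succ_ne_zero i']
    | succ j' => simp [Matrix.one_apply, Fin.succ_inj]

lemma liftSucc_mul_apply_zero (U : Matrix (Fin n) (Fin n) R)
    (M : Matrix (Fin (n+1)) (Fin (n+1)) R) (j : Fin (n+1)) :
    (liftSucc U * M) 0 j = M 0 j := by
  rw [Matrix.mul_apply, Fin.sum_univ_succ]
  simp

lemma liftSucc_mul_apply_succ (U : Matrix (Fin n) (Fin n) R)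
    (M : Matrix (Fin (n+1)) (Fin (n+1)) R) (i : Fin n) (j : Fin (n+1)) :
    (liftSucc U * M) i.succ j = ∑ k, U i k * M k.succ j := by
  rw [Matrix.mul_apply, Fin.sum_univ_succ]
  simp

lemma liftSucc_mul (U V : Matrix (Fin n) (Fin n) R) :
    liftSucc U * liftSucc V = liftSucc (U * V) := by
  ext i j
  induction i using Fin.cases with
  | zero =>
    rw [liftSucc_mul_apply_zero]
    induction j using Fin.cases with
    | zero => simp
    | succ j' => simp
  | succ i' =>
    rw [liftSucc_mul_apply_succ]
    induction j using Fin.cases with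
    | zero => simp
    | succ j' => simp [Matrix.mul_apply]

lemma Unimod.liftSucc' {U : Matrix (Fin n) (Fin n) R} (hU : Unimod U) :
    Unimod (liftSucc U) := by
  obtain ⟨V, h1, h2⟩ := hU
  exact ⟨liftSucc V, by rw [liftSucc_mul, h1, liftSucc_one],
    by rw [liftSucc_mul, h2, liftSucc_one]⟩

/-- `[[U,0],[0,1]]` -/
def liftCast (U : Matrix (Fin n) (Fin n) R) : Matrix (Fin (n+1)) (Fin (n+1)) R :=
  Matrix.of (Fin.lastCases (Fin.snoc 0 1) (fun i => Fin.snoc (U i) 0))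

@[simp] lemma liftCast_last_last (U : Matrix (Fin n) (Fin n) R) :
    liftCast U (Fin.last n) (Fin.last n) = 1 := by simp [liftCast]
@[simp] lemma liftCast_last_cast (U : Matrix (Fin n) (Fin n) R) (j : Fin n) :
    liftCast U (Fin.last n) j.castSucc = 0 := by simp [liftCast]
@[simp] lemma liftCast_cast_last (U : Matrix (Fin n) (Fin n) R) (i : Fin n) :
    liftCast U i.castSucc (Fin.last n) = 0 := by simp [liftCast]
@[simp] lemma liftCast_cast_cast (U : Matrix (Fin n) (Fin n) R) (i j : Fin n) :
    liftCast U i.castSucc j.castSucc = U i j := by simp [liftCast]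

lemma liftCast_one : liftCast (1 : Matrix (Fin n) (Fin n) R) = 1 := by
  ext i j
  induction i using Fin.lastCases with
  | last => induction j using Fin.lastCases with
    | last => simp
    | cast j' => simp [Matrix.one_apply, (Fin.castSucc_lt_last j').ne']
  | cast i' => induction j using Fin.lastCases with
    | last => simp [Matrix.one_apply, (Fin.castSucc_lt_last i').ne]
    | cast j' => simp [Matrix.one_apply, Fin.castSucc_inj]

lemma liftCast_mul_apply_last (U : Matrix (Fin n) (Fin n) R)
    (M : Matrix (Fin (n+1)) (Fin (n+1)) R) (j : Fin (n+1)) :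
    (liftCast U * M) (Fin.last n) j = M (Fin.last n) j := by
  rw [Matrix.mul_apply, Fin.sum_univ_castSucc]
  simp

lemma liftCast_mul_apply_cast (U : Matrix (Fin n) (Fin n) R)
    (M : Matrix (Fin (n+1)) (Fin (n+1)) R) (i : Fin n) (j : Fin (n+1)) :
    (liftCast U * M) i.castSucc j = ∑ k, U i k * M k.castSucc j := by
  rw [Matrix.mul_apply, Fin.sum_univ_castSucc]
  simp

lemma liftCast_mul (U V : Matrix (Fin n) (Fin n) R) :
    liftCast U * liftCast V = liftCast (U * V) := by
  ext i j
  induction i using Fin.lastCases with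
  | last =>
    rw [liftCast_mul_apply_last]
    induction j using Fin.lastCases with
    | last => simp
    | cast j' => simp
  | cast i' =>
    rw [liftCast_mul_apply_cast]
    induction j using Fin.lastCases with
    | last => simp
    | cast j' => simp [Matrix.mul_apply]

lemma Unimod.liftCast' {U : Matrix (Fin n) (Fin n) R} (hU : Unimod U) :
    Unimod (liftCast U) := by
  obtain ⟨V, h1, h2⟩ := hU
  exact ⟨liftCast V, by rw [liftCast_mul, h1, liftCast_one],
    by rw [liftCast_mul, h2, liftCast_one]⟩

end Lifts

/-- Numeric version of a `WithBot ℕ` degree: `⊥ ↦ 0`, `k ↦ k+1`. -/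
def dnat : WithBot ℕ → ℕ := fun w => w.recBotCoe 0 Nat.succ

lemma dnat_strictMono {x y : WithBot ℕ} (h : x < y) : dnat x < dnat y := by
  induction x using WithBot.recBotCoe with
  | bot =>
    induction y using WithBot.recBotCoe with
    | bot => exact absurd h (lt_irrefl _)
    | coe b => simp [dnat]
  | coe a =>
    induction y using WithBot.recBotCoe with
    | bot => exact absurd h (by simp)
    | coe b =>
      have : a < b := by exact_mod_cast h
      simpa [dnat] using Nat.succ_lt_succ this


section Clear

variable {R : Type*} [Ring R] (degD : R → WithBot ℕ)
  (hdivision : ∀ f g : R, g ≠ 0 → ∃ q rem : R, f = q * g + rem ∧ degD rem < degD g)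

include hdivision

lemma clear_col_aux : ∀ (N : ℕ) {m : ℕ} (v : Fin (m+1) → R),
    (∑ i, dnat (degD (v i))) < N →
    ∃ U : Matrix (Fin (m+1)) (Fin (m+1)) R, Unimod U ∧ ∀ i, i ≠ 0 → (U *ᵥ v) i = 0 := by
  classical
  intro N
  induction N with
  | zero => intro m v h; omega
  | succ N ih =>
    intro m v hv
    by_cases h0 : ∀ i, i ≠ (0 : Fin (m+1)) → v i = 0
    · exact ⟨1, unimod_one, by simpa using h0⟩
    · push_neg at h0
      obtain ⟨j, hj0, hjv⟩ := h0
      set S : Finset (Fin (m+1)) := Finset.univ.filter (fun i => v i ≠ 0) with hS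
      have hjS : j ∈ S := by simp [hS, hjv]
      obtain ⟨i, hiS, hmin⟩ :=
        S.exists_min_image (fun i => dnat (degD (v i))) ⟨j, hjS⟩
      have hiv : v i ≠ 0 := by simpa [hS] using hiS
      by_cases hone : ∀ k, k ≠ i → v k = 0
      · -- only position i is nonzero; swap it to position 0
        have hji : j = i := by
          by_contra hne
          exact hjv (hone j hne)
        have hi0 : i ≠ 0 := by rw [hji] at hj0; exact hj0
        refine ⟨permMat (Equiv.swap 0 i), unimod_permMat _, ?_⟩
        intro k hk
        rw [permMat_mulVec]
        rcases eq_or_ne k i with rfl | hki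
        · rw [Equiv.swap_apply_right]
          exact hone 0 (Ne.symm hi0)
        · rw [Equiv.swap_apply_of_ne_of_ne hk hki]
          exact hone k hki
      · push_neg at hone
        obtain ⟨k, hki, hkv⟩ := hone
        obtain ⟨q, r, hqr, hr⟩ := hdivision (v k) (v i) hiv
        set E : Matrix (Fin (m+1)) (Fin (m+1)) R := 1 + Matrix.single k i (-q) with hE
        set v' : Fin (m+1) → R := E *ᵥ v with hv'
        have hv'k : v' k = r := by
          rw [hv', hE, elem_mulVec, if_pos rfl, hqr]
          noncomm_ring
        have hv'ne : ∀ l, l ≠ k → v' l = v l := by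
          intro l hl
          rw [hv', hE, elem_mulVec, if_neg hl, add_zero]
        have hmeas : (∑ l, dnat (degD (v' l))) < ∑ l, dnat (degD (v l)) := by
          apply Finset.sum_lt_sum
          · intro l _
            rcases eq_or_ne l k with rfl | hl
            · rw [hv'k]
              exact le_of_lt (lt_of_lt_of_le (dnat_strictMono hr)
                (hmin l (by simp [hS, hkv])))
            · rw [hv'ne l hl]
          · refine ⟨k, Finset.mem_univ k, ?_⟩
            rw [hv'k]
            exact lt_of_lt_of_le (dnat_strictMono hr) (hmin k (by simp [hS, hkv]))
        obtain ⟨U', hU', hU'v⟩ := ih v' (by omega)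
        refine ⟨U' * E, hU'.mul (unimod_elem hki (-q)), ?_⟩
        intro l hl
        rw [← Matrix.mulVec_mulVec, ← hv']
        exact hU'v l hl

lemma clear_col {m : ℕ} (v : Fin (m+1) → R) :
    ∃ U : Matrix (Fin (m+1)) (Fin (m+1)) R, Unimod U ∧ ∀ i, i ≠ 0 → (U *ᵥ v) i = 0 :=
  clear_col_aux degD hdivision (∑ i, dnat (degD (v i)) + 1) v (by omega)

lemma dep [Nontrivial R] : ∀ (nc nr : ℕ), nc < nr → ∀ W : Matrix (Fin nr) (Fin nc) R,
    ∃ b : Fin nr → R, b ≠ 0 ∧ Matrix.vecMul b W = 0 := by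
  intro nc
  induction nc with
  | zero =>
    intro nr hnr W
    obtain ⟨nr', rfl⟩ : ∃ k, nr = k + 1 := ⟨nr - 1, by omega⟩
    refine ⟨Pi.single 0 1, ?_, ?_⟩
    · intro h
      have := congrFun h 0
      simp at this
    · funext j
      exact j.elim0
  | succ nc ih =>
    intro nr hnr W
    obtain ⟨nr', rfl⟩ : ∃ k, nr = k + 1 := ⟨nr - 1, by omega⟩
    obtain ⟨U, hU, hU0⟩ := clear_col degD hdivision (fun i => W i 0)
    set B : Matrix (Fin (nr'+1)) (Fin (nc+1)) R := U * W with hB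
    have hcol : ∀ i, i ≠ 0 → B i 0 = 0 := by
      intro i hi
      have := hU0 i hi
      simpa [hB, Matrix.mul_apply, Matrix.mulVec, dotProduct] using this
    set W' : Matrix (Fin nr') (Fin nc) R := Matrix.of fun i j => B i.succ j.succ with hW'
    obtain ⟨b', hb'0, hb'W⟩ := ih nr' (by omega) W'
    set b : Fin (nr'+1) → R := Fin.cons 0 b' with hb
    have hb0 : b ≠ 0 := by
      intro h
      apply hb'0
      funext i
      have := congrFun h i.succ
      simpa [hb] using this
    have hbB : Matrix.vecMul b B = 0 := by
      funext j
      have hsum : Matrix.vecMul b B j = ∑ i', b' i' * B i'.succ j := by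
        simp [Matrix.vecMul, dotProduct, Fin.sum_univ_succ, hb]
      induction j using Fin.cases with
      | zero =>
        rw [hsum]
        simp only [Pi.zero_apply]
        apply Finset.sum_eq_zero
        intro i' _
        rw [hcol i'.succ (Fin.succ_ne_zero i'), mul_zero]
      | succ j' =>
        rw [hsum]
        have := congrFun hb'W j'
        simpa [Matrix.vecMul, dotProduct, hW'] using this
    refine ⟨Matrix.vecMul b U, ?_, ?_⟩
    · intro h
      apply hb0
      obtain ⟨V, hUV, hVU⟩ := hU
      have : Matrix.vecMul (Matrix.vecMul b U) V = 0 := by rw [h, Matrix.zero_vecMul]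
      rwa [Matrix.vecMul_vecMul, hUV, Matrix.vecMul_one] at this
    · rw [Matrix.vecMul_vecMul, ← hB, hbB]

lemma tri [Nontrivial R] : ∀ (n : ℕ) (A : Matrix (Fin n) (Fin n) R),
    (∀ b : Fin n → R, Matrix.vecMul b A = 0 → b = 0) →
    ∃ U : Matrix (Fin n) (Fin n) R, Unimod U ∧
      (∀ i j, j < i → (U * A) i j = 0) ∧ (∀ i, (U * A) i i ≠ 0) := by
  intro n
  induction n with
  | zero =>
    intro A _
    exact ⟨1, unimod_one, fun i => i.elim0, fun i => i.elim0⟩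
  | succ n ih =>
    intro A hrank
    obtain ⟨U1, hU1, hU1v⟩ := clear_col degD hdivision (fun i => A i 0)
    set B : Matrix (Fin (n+1)) (Fin (n+1)) R := U1 * A with hB
    have hBcol : ∀ i, i ≠ 0 → B i 0 = 0 := by
      intro i hi
      have := hU1v i hi
      simpa [hB, Matrix.mul_apply, Matrix.mulVec, dotProduct] using this
    have hBrank : ∀ b : Fin (n+1) → R, Matrix.vecMul b B = 0 → b = 0 := by
      intro b hb
      obtain ⟨V1, hUV, hVU⟩ := hU1
      have h1 : Matrix.vecMul (Matrix.vecMul b U1) A = 0 := by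
        rwa [Matrix.vecMul_vecMul, ← hB]
      have h2 := hrank _ h1
      have : Matrix.vecMul (Matrix.vecMul b U1) V1 = 0 := by
        rw [h2, Matrix.zero_vecMul]
      rwa [Matrix.vecMul_vecMul, hUV, Matrix.vecMul_one] at this
    have hB00 : B 0 0 ≠ 0 := by
      intro h00
      obtain ⟨b, hb0, hbW⟩ := dep degD hdivision n (n+1) (by omega)
        (Matrix.of fun i (j : Fin n) => B i j.succ)
      apply hb0
      apply hBrank
      funext j
      induction j using Fin.cases with
      | zero =>
        simp only [Matrix.vecMul, dotProduct, Pi.zero_apply]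
        apply Finset.sum_eq_zero
        intro i _
        rcases eq_or_ne i 0 with rfl | hi
        · rw [h00, mul_zero]
        · rw [hBcol i hi, mul_zero]
      | succ j' =>
        have := congrFun hbW j'
        simpa [Matrix.vecMul, dotProduct] using this
    set B' : Matrix (Fin n) (Fin n) R := Matrix.of fun i j => B i.succ j.succ with hB'
    have hB'rank : ∀ c : Fin n → R, Matrix.vecMul c B' = 0 → c = 0 := by
      intro c hc
      have hbB : Matrix.vecMul (Fin.cons 0 c : Fin (n+1) → R) B = 0 := by
        funext j
        have hsum : Matrix.vecMul (Fin.cons 0 c : Fin (n+1) → R) B j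
            = ∑ i', c i' * B i'.succ j := by
          simp [Matrix.vecMul, dotProduct, Fin.sum_univ_succ]
        induction j using Fin.cases with
        | zero =>
          rw [hsum]
          simp only [Pi.zero_apply]
          apply Finset.sum_eq_zero
          intro i' _
          rw [hBcol i'.succ (Fin.succ_ne_zero i'), mul_zero]
        | succ j' =>
          rw [hsum]
          have := congrFun hc j'
          simpa [Matrix.vecMul, dotProduct, hB'] using this
      have := hBrank _ hbB
      funext i
      have := congrFun this i.succ
      simpa using this
    obtain ⟨U', hU', htri', hdiag'⟩ := ih B' hB'rank
    refine ⟨liftSucc U' * U1, (hU'.liftSucc').mul hU1, ?_, ?_⟩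
    · intro i j hji
      rw [Matrix.mul_assoc, ← hB]
      induction i using Fin.cases with
      | zero => exact absurd hji (Fin.not_lt_zero j).elim
      | succ i' =>
        rw [liftSucc_mul_apply_succ]
        induction j using Fin.cases with
        | zero =>
          apply Finset.sum_eq_zero
          intro k _
          rw [hBcol k.succ (Fin.succ_ne_zero k), mul_zero]
        | succ j' =>
          have hj'i' : j' < i' := by
            simpa [Fin.succ_lt_succ_iff] using hji
          have := htri' i' j' hj'i'
          rw [Matrix.mul_apply] at this
          simpa [hB'] using this
    · intro i
      rw [Matrix.mul_assoc, ← hB]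
      induction i using Fin.cases with
      | zero => rw [liftSucc_mul_apply_zero]; exact hB00
      | succ i' =>
        rw [liftSucc_mul_apply_succ]
        have := hdiag' i'
        rw [Matrix.mul_apply] at this
        simpa [hB'] using this

lemma red : ∀ (n : ℕ) (T : Matrix (Fin n) (Fin n) R),
    (∀ i j, j < i → T i j = 0) → (∀ i, T i i ≠ 0) →
    ∃ U : Matrix (Fin n) (Fin n) R, Unimod U ∧
      (∀ i j, j < i → (U * T) i j = 0) ∧ (∀ i, (U * T) i i ≠ 0) ∧
      (∀ i j, i < j → degD ((U * T) i j) < degD ((U * T) j j)) := by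
  classical
  intro n
  induction n with
  | zero =>
    intro T _ _
    exact ⟨1, unimod_one, fun i => i.elim0, fun i => i.elim0, fun i => i.elim0⟩
  | succ n ih =>
    intro T htri hdiag
    set T₁ : Matrix (Fin n) (Fin n) R :=
      Matrix.of fun i j => T i.castSucc j.castSucc with hT₁
    obtain ⟨U₁, hU₁, a1, a2, a3⟩ := ih T₁
      (fun i j hji => htri i.castSucc j.castSucc (by simpa using hji))
      (fun i => hdiag i.castSucc)
    set M : Matrix (Fin (n+1)) (Fin (n+1)) R := liftCast U₁ * T with hM
    set a : R := T (Fin.last n) (Fin.last n) with ha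
    have haz : a ≠ 0 := hdiag _
    have hMlast : ∀ j, M (Fin.last n) j = T (Fin.last n) j := fun j =>
      liftCast_mul_apply_last U₁ T j
    have hMlastc : ∀ j' : Fin n, M (Fin.last n) j'.castSucc = 0 := by
      intro j'
      rw [hMlast]
      exact htri _ _ (Fin.castSucc_lt_last j')
    have hMcc : ∀ i j : Fin n, M i.castSucc j.castSucc = (U₁ * T₁) i j := by
      intro i j
      rw [hM, liftCast_mul_apply_cast, Matrix.mul_apply]
      rfl
    choose q r hqr hr using fun i : Fin n =>
      hdivision (M i.castSucc (Fin.last n)) a haz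
    set w : Fin (n+1) → R := Fin.snoc (fun i => -(q i)) 0 with hw
    set N : Matrix (Fin (n+1)) (Fin (n+1)) R :=
      Matrix.of fun i j => if j = Fin.last n then w i else 0 with hN
    have hNlast : ∀ j, N (Fin.last n) j = 0 := by
      intro j
      rw [hN]
      simp only [Matrix.of_apply]
      split
      · simp [hw]
      · rfl
    have hNN : N * N = 0 := by
      ext i j
      rw [Matrix.mul_apply]
      apply Finset.sum_eq_zero
      intro k _
      rcases eq_or_ne k (Fin.last n) with rfl | hk
      · rw [hNlast, mul_zero]
      · rw [hN]
        simp [hk]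
    have hEuni : Unimod (1 + N) := by
      refine ⟨1 - N, ?_, ?_⟩ <;>
      · noncomm_ring
        rw [hNN]
        abel
    have hNM : ∀ i j, (N * M) i j = w i * M (Fin.last n) j := by
      intro i j
      rw [Matrix.mul_apply]
      rw [Finset.sum_eq_single (Fin.last n)]
      · rw [hN]; simp
      · intro k _ hk
        rw [hN]; simp [hk]
      · simp
    set H : Matrix (Fin (n+1)) (Fin (n+1)) R := (1 + N) * M with hH
    have hHapp : ∀ i j, H i j = M i j + w i * M (Fin.last n) j := by
      intro i j
      rw [hH, Matrix.add_mul, Matrix.one_mul, Matrix.add_apply, hNM]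
    have hHc : ∀ i (j' : Fin n), H i j'.castSucc = M i j'.castSucc := by
      intro i j'
      rw [hHapp, hMlastc, mul_zero, add_zero]
    have hHlastlast : H (Fin.last n) (Fin.last n) = a := by
      rw [hHapp, hw]
      simp [hMlast, ha]
    have hHclast : ∀ i' : Fin n, H i'.castSucc (Fin.last n) = r i' := by
      intro i'
      rw [hHapp, hw, hMlast, ← ha]
      simp only [Fin.snoc_castSucc]
      rw [hqr i']
      noncomm_ring
    refine ⟨(1 + N) * liftCast U₁, hEuni.mul hU₁.liftCast', ?_, ?_, ?_⟩
    · intro i j hji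
      rw [Matrix.mul_assoc, ← hM, ← hH]
      have hjlt : j < Fin.last n := lt_of_lt_of_le hji (Fin.le_last i)
      obtain ⟨j', rfl⟩ : ∃ j' : Fin n, j = j'.castSucc :=
        ⟨⟨j.1, hjlt⟩, by simp [Fin.castSucc, Fin.ext_iff]⟩
      rw [hHc]
      induction i using Fin.lastCases with
      | last => exact hMlastc j'
      | cast i' =>
        rw [hMcc]
        exact a1 i' j' (by simpa using hji)
    · intro i
      rw [Matrix.mul_assoc, ← hM, ← hH]
      induction i using Fin.lastCases with
      | last => rw [hHlastlast]; exact haz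
      | cast i' =>
        rw [hHc, hMcc]
        exact a2 i'
    · intro i j hij
      rw [Matrix.mul_assoc, ← hM, ← hH]
      induction j using Fin.lastCases with
      | last =>
        have hilt : i < Fin.last n := hij
        obtain ⟨i', rfl⟩ : ∃ i' : Fin n, i = i'.castSucc :=
          ⟨⟨i.1, hilt⟩, by simp [Fin.castSucc, Fin.ext_iff]⟩
        rw [hHclast, hHlastlast]
        exact hr i'
      | cast j' =>
        have hilt : i < Fin.last n :=
          lt_of_lt_of_le hij (Fin.le_last j'.castSucc)
        obtain ⟨i', rfl⟩ : ∃ i' : Fin n, i = i'.castSucc :=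
          ⟨⟨i.1, hilt⟩, by simp [Fin.castSucc, Fin.ext_iff]⟩
        rw [hHc, hHc, hMcc, hMcc]
        exact a3 i' j' (by simpa using hij)

end Clear

/-- Every full left-row-rank matrix `A ∈ R^{n×n}` admits a
Hermite form: there exist a unimodular `U` and a matrix `H` in Hermite form
(upper triangular, nonzero diagonal, entries above each diagonal entry of
strictly smaller degree) with `U * A = H`. -/
theorem stmt2
    {R : Type*} [Ring R] [Nontrivial R] [NoZeroDivisors R]
    (degD : R → WithBot ℕ)
    (hbot : ∀ r : R, degD r = ⊥ ↔ r = 0)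
    (hmul : ∀ r s : R, degD (r * s) = degD r + degD s)
    (hadd : ∀ r s : R, degD (r + s) ≤ max (degD r) (degD s))
    (hunit : ∀ r : R, degD r = 0 → IsUnit r)
    (hdivision : ∀ f g : R, g ≠ 0 → ∃ q rem : R, f = q * g + rem ∧ degD rem < degD g)
    {n : ℕ} (A : Matrix (Fin n) (Fin n) R)
    (hrank : ∀ b : Fin n → R, Matrix.vecMul b A = 0 → b = 0) :
    ∃ U H : Matrix (Fin n) (Fin n) R,
      (∃ V : Matrix (Fin n) (Fin n) R, U * V = 1 ∧ V * U = 1) ∧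
      (∀ i j : Fin n, j < i → H i j = 0) ∧
      (∀ i : Fin n, H i i ≠ 0) ∧
      (∀ i j : Fin n, i < j → degD (H i j) < degD (H j j)) ∧
      U * A = H := by
  obtain ⟨U₁, hU₁, htri, hdiag⟩ := tri degD hdivision n A hrank
  obtain ⟨U₂, hU₂, htri', hdiag', hdeg'⟩ := red degD hdivision n (U₁ * A) htri hdiag
  exact ⟨U₂ * U₁, U₂ * (U₁ * A), hU₂.mul hU₁, htri', hdiag', hdeg', (Matrix.mul_assoc _ _ _)⟩
end

section
/- Let A ∈ R^{n×n} have full left row rank. Suppose U₁·A = H₁ and U₂·A = H₂ where U₁, U₂ ∈ R^{n×n} are unimodular and H₁, H₂ ∈ R^{n×n} are in Hermite form. Then there exists a diagonal matrix D ∈ R^{n×n} whose diagonal entries are units of R of degree 0, such that H₂ = D·H₁ and U₂ = D·U₁. In particular the Hermite form is unique up to left multiplication by a diagonal matrix of units, and degD (H₁)_{ii} = degD (H₂)_{ii} for all i. -/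
/-- Uniqueness of the Hermite form up to a diagonal matrix
of degree-0 units: if `U₁ * A = H₁` and `U₂ * A = H₂` with `U₁, U₂`
unimodular and `H₁, H₂` in Hermite form, then there is a diagonal matrix `D`
whose diagonal entries are units of degree 0 with `H₂ = D * H₁` and
`U₂ = D * U₁`; in particular the diagonal degrees agree. -/
theorem stmt3
    {R : Type*} [Ring R] [Nontrivial R] [NoZeroDivisors R]
    (degD : R → WithBot ℕ)
    (hbot : ∀ r : R, degD r = ⊥ ↔ r = 0)
    (hmul : ∀ r s : R, degD (r * s) = degD r + degD s)
    (hadd : ∀ r s : R, degD (r + s) ≤ max (degD r) (degD s))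
    (hunit : ∀ r : R, degD r = 0 → IsUnit r)
    (hdivision : ∀ f g : R, g ≠ 0 → ∃ q rem : R, f = q * g + rem ∧ degD rem < degD g)
    {n : ℕ} (A U₁ U₂ H₁ H₂ : Matrix (Fin n) (Fin n) R)
    (hrank : ∀ b : Fin n → R, Matrix.vecMul b A = 0 → b = 0)
    (hU₁ : ∃ V : Matrix (Fin n) (Fin n) R, U₁ * V = 1 ∧ V * U₁ = 1)
    (hU₂ : ∃ V : Matrix (Fin n) (Fin n) R, U₂ * V = 1 ∧ V * U₂ = 1)
    (hH₁ut : ∀ i j : Fin n, j < i → H₁ i j = 0)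
    (hH₁diag : ∀ i : Fin n, H₁ i i ≠ 0)
    (hH₁deg : ∀ i j : Fin n, i < j → degD (H₁ i j) < degD (H₁ j j))
    (hH₂ut : ∀ i j : Fin n, j < i → H₂ i j = 0)
    (hH₂diag : ∀ i : Fin n, H₂ i i ≠ 0)
    (hH₂deg : ∀ i j : Fin n, i < j → degD (H₂ i j) < degD (H₂ j j))
    (hUA₁ : U₁ * A = H₁) (hUA₂ : U₂ * A = H₂) :
    (∃ D : Matrix (Fin n) (Fin n) R,
      (∀ i j : Fin n, i ≠ j → D i j = 0) ∧
      (∀ i : Fin n, IsUnit (D i i) ∧ degD (D i i) = 0) ∧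
      H₂ = D * H₁ ∧ U₂ = D * U₁) ∧
    (∀ i : Fin n, degD (H₁ i i) = degD (H₂ i i)) := by
  -- basic degree facts
  have hne : ∀ r : R, r ≠ 0 → degD r ≠ ⊥ := fun r hr h => hr ((hbot r).mp h)
  have hdeg1 : degD (1 : R) = 0 := by
    have h := hmul 1 1
    rw [one_mul] at h
    obtain ⟨d, hd⟩ := WithBot.ne_bot_iff_exists.mp (hne 1 one_ne_zero)
    rw [← hd, ← WithBot.coe_add] at h
    rw [← hd]
    have : d = d + d := WithBot.coe_inj.mp h
    have : d = 0 := by omega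
    simp [this]
  have hzero : ∀ u v : R, u * v = 1 → degD u = 0 ∧ degD v = 0 := by
    intro u v huv
    have hu : u ≠ 0 := by rintro rfl; rw [zero_mul] at huv; exact one_ne_zero huv.symm
    have hv : v ≠ 0 := by rintro rfl; rw [mul_zero] at huv; exact one_ne_zero huv.symm
    have h : degD u + degD v = 0 := by rw [← hmul, huv, hdeg1]
    obtain ⟨a, ha⟩ := WithBot.ne_bot_iff_exists.mp (hne u hu)
    obtain ⟨b, hb⟩ := WithBot.ne_bot_iff_exists.mp (hne v hv)
    rw [← ha, ← hb, ← WithBot.coe_add] at h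
    have hab : a + b = 0 := WithBot.coe_eq_zero.mp h
    constructor
    · rw [← ha, show a = 0 by omega]; exact WithBot.coe_zero
    · rw [← hb, show b = 0 by omega]; exact WithBot.coe_zero
  have hdegneg : ∀ r : R, degD (-r) = degD r := by
    intro r
    have h1 : degD (-1 : R) = 0 := (hzero (-1) (-1) (by rw [neg_mul_neg, one_mul])).1
    rw [← neg_one_mul, hmul, h1, zero_add]
  obtain ⟨V₁, hV₁l, hV₁r⟩ := hU₁
  obtain ⟨V₂, hV₂l, hV₂r⟩ := hU₂
  set W := U₂ * V₁ with hWdef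
  set W' := U₁ * V₂ with hW'def
  have hWU : W * U₁ = U₂ := by rw [hWdef, Matrix.mul_assoc, hV₁r, Matrix.mul_one]
  have hW'U : W' * U₂ = U₁ := by rw [hW'def, Matrix.mul_assoc, hV₂r, Matrix.mul_one]
  have hWH : W * H₁ = H₂ := by rw [← hUA₁, ← hUA₂, ← Matrix.mul_assoc, hWU]
  have hW'H : W' * H₂ = H₁ := by rw [← hUA₁, ← hUA₂, ← Matrix.mul_assoc, hW'U]
  have hWW' : W * W' = 1 := by
    rw [hWdef, hW'def, Matrix.mul_assoc, ← Matrix.mul_assoc V₁, hV₁r, Matrix.one_mul, hV₂l]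
  -- below-diagonal entries of a transition matrix vanish
  have lowzero : ∀ (M H G : Matrix (Fin n) (Fin n) R),
      M * H = G → (∀ i j, j < i → H i j = 0) → (∀ i, H i i ≠ 0) →
      (∀ i j, j < i → G i j = 0) →
      ∀ j i : Fin n, j < i → M i j = 0 := by
    intro M H G hMH hHut hHd hGut
    have step : ∀ j : Fin n, (∀ k : Fin n, k < j → ∀ i, k < i → M i k = 0) →
        ∀ i, j < i → M i j = 0 := by
      intro j IH i hij
      have hs : (0:R) = ∑ k, M i k * H k j := by
        rw [← Matrix.mul_apply, hMH]; exact (hGut i j hij).symm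
      have hsum : ∑ k, M i k * H k j = M i j * H j j := by
        apply Finset.sum_eq_single
        · intro k _ hkj
          rcases lt_or_gt_of_ne hkj with h | h
          · rw [IH k h i (h.trans hij), zero_mul]
          · rw [hHut k j h, mul_zero]
        · intro h; exact absurd (Finset.mem_univ j) h
      rw [hsum] at hs
      rcases mul_eq_zero.mp hs.symm with h | h
      · exact h
      · exact absurd h (hHd j)
    have main : ∀ m : ℕ, ∀ j : Fin n, j.val ≤ m → ∀ i, j < i → M i j = 0 := by
      intro m
      induction m with
      | zero =>
        intro j hj
        exact step j (fun k hk => absurd (show k.val < j.val from hk) (by omega))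
      | succ m IHm =>
        intro j hj
        exact step j (fun k hk => IHm k (by have : k.val < j.val := hk; omega))
    intro j i hij
    exact main j.val j le_rfl i hij
  have hWlow := lowzero W H₁ H₂ hWH hH₁ut hH₁diag hH₂ut
  have hW'low := lowzero W' H₂ H₁ hW'H hH₂ut hH₂diag hH₁ut
  have hdiagWW' : ∀ i, W i i * W' i i = 1 := by
    intro i
    have h1 : ∑ k, W i k * W' k i = W i i * W' i i := by
      apply Finset.sum_eq_single
      · intro k _ hk
        rcases lt_or_gt_of_ne hk with h | h
        · rw [hWlow k i h, zero_mul]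
        · rw [hW'low i k h, mul_zero]
      · intro h; exact absurd (Finset.mem_univ i) h
    have h2 : (W * W') i i = 1 := by rw [hWW', Matrix.one_apply_eq]
    rw [Matrix.mul_apply, h1] at h2; exact h2
  have hWdeg0 : ∀ i, degD (W i i) = 0 := fun i => (hzero _ _ (hdiagWW' i)).1
  have hWunit : ∀ i, IsUnit (W i i) := fun i => hunit _ (hWdeg0 i)
  have hdiagH : ∀ j, H₂ j j = W j j * H₁ j j := by
    intro j
    have h1 : ∑ k, W j k * H₁ k j = W j j * H₁ j j := by
      apply Finset.sum_eq_single
      · intro k _ hk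
        rcases lt_or_gt_of_ne hk with h | h
        · rw [hWlow k j h, zero_mul]
        · rw [hH₁ut k j h, mul_zero]
      · intro h; exact absurd (Finset.mem_univ j) h
    rw [← hWH, Matrix.mul_apply, h1]
  have hdeq : ∀ i, degD (H₁ i i) = degD (H₂ i i) := by
    intro i; rw [hdiagH i, hmul, hWdeg0, zero_add]
  -- above-diagonal entries vanish, by induction on the gap
  have hupper : ∀ g : ℕ, ∀ i j : Fin n, i < j → j.val - i.val ≤ g → W i j = 0 := by
    intro g
    induction g with
    | zero =>
      intro i j hij hle
      have : i.val < j.val := hij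
      omega
    | succ g IH =>
      intro i j hij hle
      have hij' : i ≠ j := ne_of_lt hij
      have hijv : i.val < j.val := hij
      have h1 : ∑ k ∈ ({i, j} : Finset (Fin n)), W i k * H₁ k j = ∑ k, W i k * H₁ k j := by
        apply Finset.sum_subset (Finset.subset_univ _)
        intro k _ hk
        simp only [Finset.mem_insert, Finset.mem_singleton, not_or] at hk
        obtain ⟨hki, hkj⟩ := hk
        rcases lt_trichotomy k i with h | h | h
        · rw [hWlow k i h, zero_mul]
        · exact absurd h hki
        · rcases lt_trichotomy k j with h2 | h2 | h2
          · have hikv : i.val < k.val := h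
            have hkjv : k.val < j.val := h2
            rw [IH i k h (by omega), zero_mul]
          · exact absurd h2 hkj
          · rw [hH₁ut k j h2, mul_zero]
      have hsplit : H₂ i j = W i i * H₁ i j + W i j * H₁ j j := by
        rw [← hWH, Matrix.mul_apply, ← h1, Finset.sum_pair hij']
      have hkey : W i j * H₁ j j = H₂ i j + -(W i i * H₁ i j) := by
        rw [hsplit]; abel
      by_contra hWij
      obtain ⟨a, ha⟩ := WithBot.ne_bot_iff_exists.mp (hne _ hWij)
      obtain ⟨b, hb⟩ := WithBot.ne_bot_iff_exists.mp (hne _ (hH₁diag j))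
      have hR : degD (H₂ i j + -(W i i * H₁ i j)) < degD (H₁ j j) := by
        apply lt_of_le_of_lt (hadd _ _)
        apply max_lt
        · rw [hdeq j]; exact hH₂deg i j hij
        · rw [hdegneg, hmul, hWdeg0, zero_add]; exact hH₁deg i j hij
      rw [← hkey, hmul, ← ha, ← hb, ← WithBot.coe_add] at hR
      exact absurd (WithBot.coe_lt_coe.mp hR) (by omega)
  have hWupper : ∀ i j : Fin n, i < j → W i j = 0 :=
    fun i j h => hupper (j.val - i.val) i j h le_rfl
  refine ⟨⟨W, ?_, fun i => ⟨hWunit i, hWdeg0 i⟩, hWH.symm, hWU.symm⟩, hdeq⟩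
  intro i j hij
  rcases lt_or_gt_of_ne hij with h | h
  · exact hWupper i j h
  · exact hWlow j i h
end

section
/- Let d be a natural number and let A ∈ K^{n×n} be invertible with every entry of degree at most d. Suppose A = T·D·P·V is a Bruhat decomposition, i.e. T ∈ K^{n×n} is upper triangular with all diagonal entries equal to 1, V ∈ K^{n×n} is lower triangular with all diagonal entries equal to 1, P ∈ K^{n×n} is a permutation matrix, and D ∈ K^{n×n} is diagonal with nonzero diagonal entries u_1, …, u_n. Then Σ_{i=1}^n deg u_i ≤ n·d. (The quantity Σ_i deg u_i is the degree of the Dieudonné determinant of A, so this says deg Ddet(A) ≤ n·d.) -/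
open Finset

theorem Equiv.Perm.apply_inv_self {α : Type*} (f : Equiv.Perm α) (x : α) : f (f⁻¹ x) = x :=
  f.apply_symm_apply x

theorem Equiv.Perm.inv_apply_self {α : Type*} (f : Equiv.Perm α) (x : α) : f⁻¹ (f x) = x :=
  f.symm_apply_apply x

section Deg

variable {K : Type*} [DivisionRing K] (deg : K → WithBot ℤ)

lemma deg_one_eq (hbot : ∀ a : K, deg a = ⊥ ↔ a = 0)
    (hmul : ∀ a b : K, deg (a * b) = deg a + deg b) : deg 1 = 0 := by
  have h := hmul 1 1
  rw [one_mul] at h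
  have hne : deg (1 : K) ≠ ⊥ := fun hb => one_ne_zero ((hbot 1).mp hb)
  obtain ⟨m, hm⟩ := WithBot.ne_bot_iff_exists.mp hne
  rw [← hm] at h ⊢
  rw [← WithBot.coe_add] at h
  have : m = m + m := WithBot.coe_injective h
  have : m = 0 := by omega
  simp [this]

lemma deg_neg_eq (hbot : ∀ a : K, deg a = ⊥ ↔ a = 0)
    (hmul : ∀ a b : K, deg (a * b) = deg a + deg b) (x : K) : deg (-x) = deg x := by
  have hm1 : deg (-1 : K) = 0 := by
    have h := hmul (-1 : K) (-1)
    rw [neg_one_mul, neg_neg, deg_one_eq deg hbot hmul] at h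
    have hne : deg (-1 : K) ≠ ⊥ := fun hb => by
      have := (hbot _).mp hb; simp at this
    obtain ⟨m, hm⟩ := WithBot.ne_bot_iff_exists.mp hne
    rw [← hm] at h ⊢
    rw [← WithBot.coe_add] at h
    have : m + m = 0 := (WithBot.coe_injective h.symm)
    have : m = 0 := by omega
    simp [this]
  calc deg (-x) = deg ((-1 : K) * x) := by rw [neg_one_mul]
    _ = deg (-1 : K) + deg x := hmul _ _
    _ = deg x := by rw [hm1, zero_add]

lemma deg_sub_le (hbot : ∀ a : K, deg a = ⊥ ↔ a = 0)
    (hadd : ∀ a b : K, deg (a + b) ≤ max (deg a) (deg b))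
    (hmul : ∀ a b : K, deg (a * b) = deg a + deg b) (x y : K) :
    deg (x - y) ≤ max (deg x) (deg y) := by
  have := hadd x (-y)
  rwa [← sub_eq_add_neg, deg_neg_eq deg hbot hmul] at this

/-- `deg (x * a⁻¹ * y) ≤ c` when `deg x ≤ deg a` and `deg y ≤ c`. -/
lemma deg_mul_inv_mul_le (hbot : ∀ a : K, deg a = ⊥ ↔ a = 0)
    (hmul : ∀ a b : K, deg (a * b) = deg a + deg b)
    (hinv : ∀ a : K, a ≠ 0 → deg a⁻¹ = (deg a).map (fun k : ℤ => -k))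
    {c : WithBot ℤ} {a x y : K} (ha : a ≠ 0) (hx : deg x ≤ deg a) (hy : deg y ≤ c) :
    deg (x * a⁻¹ * y) ≤ c := by
  have hane : deg a ≠ ⊥ := fun hb => ha ((hbot a).mp hb)
  obtain ⟨m, hm⟩ := WithBot.ne_bot_iff_exists.mp hane
  have hia : deg a⁻¹ = ((-m : ℤ) : WithBot ℤ) := by
    rw [hinv a ha, ← hm]; rfl
  rw [hmul, hmul, hia]
  have h1 : deg x + ((-m : ℤ) : WithBot ℤ) ≤ 0 := by
    calc deg x + ((-m : ℤ) : WithBot ℤ) ≤ ((m : ℤ) : WithBot ℤ) + ((-m : ℤ) : WithBot ℤ) := by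
          apply add_le_add_left
          rw [← hm] at hx; exact hx
      _ = 0 := by rw [← WithBot.coe_add]; simp
  calc deg x + ((-m : ℤ) : WithBot ℤ) + deg y ≤ 0 + deg y := add_le_add_left h1 _
    _ = deg y := zero_add _
    _ ≤ c := hy

/-- `deg (x - y * a⁻¹ * z) ≤ c`. -/
lemma deg_sub_mul_inv_mul_le (hbot : ∀ a : K, deg a = ⊥ ↔ a = 0)
    (hadd : ∀ a b : K, deg (a + b) ≤ max (deg a) (deg b))
    (hmul : ∀ a b : K, deg (a * b) = deg a + deg b)
    (hinv : ∀ a : K, a ≠ 0 → deg a⁻¹ = (deg a).map (fun k : ℤ => -k))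
    {c : WithBot ℤ} {a x y z : K} (ha : a ≠ 0)
    (hx : deg x ≤ c) (hy : deg y ≤ deg a) (hz : deg z ≤ c) :
    deg (x - y * a⁻¹ * z) ≤ c := by
  refine le_trans (deg_sub_le deg hbot hadd hmul _ _) (max_le hx ?_)
  exact deg_mul_inv_mul_le deg hbot hmul hinv ha hy hz

/-- A Bruhat-type decomposition, entrywise. `u` is the vector of diagonal
entries of the middle diagonal matrix. -/
def IsDec {n : ℕ} (A T : Fin n → Fin n → K) (u : Fin n → K) (V : Fin n → Fin n → K)
    (σ : Equiv.Perm (Fin n)) : Prop :=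
  (∀ i j, j < i → T i j = 0) ∧ (∀ i, T i i = 1) ∧
  (∀ i j, i < j → V i j = 0) ∧ (∀ i, V i i = 1) ∧
  (∀ k, u k ≠ 0) ∧
  (∀ p q, A p q = ∑ k, T p k * u k * V (σ k) q)

lemma sum_split_pair {M : Type*} [AddCommMonoid M] {n : ℕ} {i j : Fin n} (hij : i ≠ j)
    (f : Fin n → M) :
    ∑ k, f k = (∑ k ∈ (Finset.univ.erase i).erase j, f k) + f j + f i := by
  rw [← Finset.sum_erase_add Finset.univ f (Finset.mem_univ i)]
  congr 1
  rw [← Finset.sum_erase_add (Finset.univ.erase i) f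
    (Finset.mem_erase.mpr ⟨Ne.symm hij, Finset.mem_univ j⟩)]

section Helpers

variable {n : ℕ} {A T : Fin (n+1) → Fin (n+1) → K} {u : Fin (n+1) → K}
  {V : Fin (n+1) → Fin (n+1) → K} {σ : Equiv.Perm (Fin (n+1))}

/-- Last row of a decomposed matrix. -/
lemma IsDec.row_last (h : IsDec A T u V σ) (q : Fin (n+1)) :
    A (Fin.last n) q = u (Fin.last n) * V (σ (Fin.last n)) q := by
  obtain ⟨hT, hTd, hV, hVd, hu, hA⟩ := h
  rw [hA]
  rw [Finset.sum_eq_single (Fin.last n)]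
  · rw [hTd, one_mul]
  · intro k _ hk
    rw [hT _ _ (lt_of_le_of_ne (Fin.le_last k) hk), zero_mul, zero_mul]
  · simp

/-- Last column of a decomposed matrix. -/
lemma IsDec.col_last (h : IsDec A T u V σ) (p : Fin (n+1)) :
    A p (Fin.last n) = T p (σ⁻¹ (Fin.last n)) * u (σ⁻¹ (Fin.last n)) := by
  obtain ⟨hT, hTd, hV, hVd, hu, hA⟩ := h
  rw [hA]
  rw [Finset.sum_eq_single (σ⁻¹ (Fin.last n))]
  · rw [Equiv.Perm.apply_inv_self, hVd, mul_one]
  · intro k _ hk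
    have hne : σ k ≠ Fin.last n := fun hh => hk (by
      have := congrArg σ.symm hh
      simpa using this)
    rw [hV _ _ (lt_of_le_of_ne (Fin.le_last _) hne), mul_zero]
  · simp

end Helpers


section Adj

variable {n : ℕ}

/-- Swapping two adjacent rows of a decomposed matrix: there is a decomposition
of the swapped matrix with the same total degree of diagonal entries. -/
lemma adj_swap
    (hbot : ∀ a : K, deg a = ⊥ ↔ a = 0)
    (hmul : ∀ a b : K, deg (a * b) = deg a + deg b)
    (hinv : ∀ a : K, a ≠ 0 → deg a⁻¹ = (deg a).map (fun k : ℤ => -k))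
    {A T : Fin n → Fin n → K} {u : Fin n → K} {V : Fin n → Fin n → K}
    {σ : Equiv.Perm (Fin n)}
    (hdec : IsDec A T u V σ) {i j : Fin n} (hj : (j : ℕ) = (i : ℕ) + 1) :
    ∃ T' u' V' σ', IsDec (fun p q => A (Equiv.swap i j p) q) T' u' V' σ' ∧
      ∑ k, deg (u' k) = ∑ k, deg (u k) := by
  obtain ⟨hT, hTd, hV, hVd, hu, hA⟩ := hdec
  have hij : i ≠ j := by
    intro h; rw [h] at hj; omega
  have hji : j ≠ i := fun h => hij h.symm
  have hijlt : i < j := by rw [Fin.lt_def]; omega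
  set θ := Equiv.swap i j with hθdef
  have hθi : θ i = j := Equiv.swap_apply_left i j
  have hθj : θ j = i := Equiv.swap_apply_right i j
  have hθo : ∀ x, x ≠ i → x ≠ j → θ x = x := fun x h1 h2 =>
    Equiv.swap_apply_of_ne_of_ne h1 h2
  have hvne : ∀ {a b : Fin n}, a ≠ b → (a : ℕ) ≠ (b : ℕ) := by
    intro a b h hh; exact h (Fin.ext hh)
  have horder : ∀ p k : Fin n, k < p → ¬(k = i ∧ p = j) → θ k < θ p := by
    intro p k hkp hnot
    have hkpv := Fin.lt_def.mp hkp
    rcases eq_or_ne k i with rfl | hki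
    · rcases eq_or_ne p j with rfl | hpj
      · exact absurd ⟨rfl, rfl⟩ hnot
      · have hpk : p ≠ k := fun h => by rw [h] at hkpv; omega
        rw [hθi, hθo p hpk hpj, Fin.lt_def]
        have := hvne hpj
        omega
    · rcases eq_or_ne k j with hkj' | hkj
      · rw [hkj'] at hkpv ⊢
        have hpi : p ≠ i := fun h => by rw [h] at hkpv; omega
        have hpj : p ≠ j := fun h => by rw [h] at hkpv; omega
        rw [hθj, hθo p hpi hpj, Fin.lt_def]
        omega
      · rw [hθo k hki hkj]
        rcases eq_or_ne p i with rfl | hpi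
        · rw [hθi, Fin.lt_def]; omega
        · rcases eq_or_ne p j with rfl | hpj
          · rw [hθj, Fin.lt_def]
            have := hvne hki
            omega
          · rw [hθo p hpi hpj]; exact hkp
  set c := T i j with hcdef
  have hThji : T (θ j) (θ i) = c := by rw [hθj, hθi]
  have hThij : T (θ i) (θ j) = 0 := by rw [hθi, hθj]; exact hT j i hijlt
  have hTh0 : ∀ p k, k < p → ¬(k = i ∧ p = j) → T (θ p) (θ k) = 0 := fun p k h1 h2 =>
    hT _ _ (horder p k h1 h2)
  set T1 : Fin n → Fin n → K :=
    fun p k => T (θ p) (θ k) - (if k = i then T (θ p) (θ j) * c else 0) with hT1def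
  have hT1up : ∀ p k, k < p → T1 p k = 0 := by
    intro p k hkp
    by_cases hki : k = i
    · simp only [hT1def]
      rw [if_pos hki, hki]
      by_cases hpj : p = j
      · rw [hpj, hThji]
        have h1 : T (θ j) (θ j) = 1 := hTd _
        rw [h1, one_mul, sub_self]
      · have hilt : i < p := by rw [← hki]; exact hkp
        have h1 : T (θ p) (θ i) = 0 := hTh0 p i hilt (fun hh => hpj hh.2)
        have h2 : T (θ p) (θ j) = 0 := by
          apply hTh0 p j ?_ (fun hh => hij hh.1.symm)
          rw [Fin.lt_def]
          have h3 := Fin.lt_def.mp hilt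
          have h4 := hvne (show p ≠ j from hpj)
          omega
        rw [h1, h2, zero_mul, sub_zero]
    · simp only [hT1def]
      rw [if_neg hki, sub_zero]
      exact hTh0 p k hkp (fun hh => hki hh.1)
  have hT1d : ∀ p, T1 p p = 1 := by
    intro p
    simp only [hT1def]
    by_cases hpi : p = i
    · rw [if_pos hpi, hpi, hThij, zero_mul, sub_zero]
      exact hTd _
    · rw [if_neg hpi, sub_zero]
      exact hTd _
  have hswapA : ∀ p q, A (θ p) q = ∑ k, T (θ p) (θ k) * u (θ k) * V (σ (θ k)) q := by
    intro p q
    rw [hA (θ p) q]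
    exact (Equiv.sum_comp θ (fun k => T (θ p) k * u k * V (σ k) q)).symm
  by_cases hcase : c = 0 ∨ σ j < σ i
  · -- Case 1 : the decomposition transforms without touching the diagonal.
    set m : K := (u i)⁻¹ * (c * u j) with hmdef
    have hmzero : c = 0 → m = 0 := by
      intro h; rw [hmdef, h, zero_mul, mul_zero]
    refine ⟨T1, fun k => u (θ k),
      fun a q => V a q + (if a = σ i then m * V (σ j) q else 0),
      σ * θ, ⟨hT1up, hT1d, ?_, ?_, fun k => hu (θ k), ?_⟩, ?_⟩
    · intro a b hab
      simp only []
      rw [hV a b hab, zero_add]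
      rcases eq_or_ne a (σ i) with rfl | hne
      · rw [if_pos rfl]
        rcases hcase with h0 | hlt
        · rw [hmzero h0, zero_mul]
        · rw [hV (σ j) b (lt_trans hlt hab), mul_zero]
      · rw [if_neg hne]
    · intro a
      simp only []
      rw [hVd a]
      rcases eq_or_ne a (σ i) with rfl | hne
      · rw [if_pos rfl]
        rcases hcase with h0 | hlt
        · rw [hmzero h0, zero_mul, add_zero]
        · rw [hV (σ j) (σ i) hlt, mul_zero, add_zero]
      · rw [if_neg hne, add_zero]
    · intro p q
      simp only [Equiv.Perm.mul_apply]
      rw [hswapA p q]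
      rw [sum_split_pair hij, sum_split_pair hij]
      rw [add_assoc, add_assoc]
      congr 1
      · apply Finset.sum_congr rfl
        intro k hk
        have hkj : k ≠ j := (Finset.mem_erase.mp hk).1
        have hki : k ≠ i := (Finset.mem_erase.mp (Finset.mem_erase.mp hk).2).1
        simp only [hT1def, hθo k hki hkj]
        rw [if_neg hki, sub_zero,
          if_neg (show σ k ≠ σ i from fun hh => hki (σ.injective hh)), add_zero]
      · have hgj : T1 p j = T (θ p) i := by
          show T (θ p) (θ j) - (if j = i then T (θ p) (θ j) * c else 0) = T (θ p) i
          rw [if_neg hji, sub_zero, hθj]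
        have hgi : T1 p i = T (θ p) j - T (θ p) i * c := by
          show T (θ p) (θ i) - (if i = i then T (θ p) (θ j) * c else 0)
            = T (θ p) j - T (θ p) i * c
          rw [if_pos rfl, hθi, hθj]
        have hσji : σ j ≠ σ i := fun hh => hij (σ.injective hh).symm
        simp only [hθj, hθi, hgj, hgi, if_true, eq_self_iff_true, if_neg hσji, add_zero]
        simp only [hmdef, mul_add, sub_mul, mul_assoc]
        simp only [mul_inv_cancel_left₀ (hu i)]
        abel
    · exact Equiv.sum_comp θ (fun k => deg (u k))
  · -- Case 2 : c ≠ 0 and σ i < σ j.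
    push_neg at hcase
    obtain ⟨hc, hnlt⟩ := hcase
    have hne1 : σ i ≠ σ j := fun hh => hij (σ.injective hh)
    have hlt : σ i < σ j := lt_of_le_of_ne hnlt hne1
    set w : K := (c * u j)⁻¹ * u i with hwdef
    refine ⟨fun p k => T1 p k + (if k = j then T1 p i * c⁻¹ else 0),
      fun k => if k = i then -(c⁻¹ * u i) else if k = j then c * u j else u k,
      fun a q => V a q + (if a = σ j then w * V (σ i) q else 0),
      σ, ⟨?_, ?_, ?_, ?_, ?_, ?_⟩, ?_⟩
    · intro p k hkp
      simp only []
      by_cases hkj : k = j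
      · have hjp : j < p := hkj ▸ hkp
        rw [if_pos hkj, hT1up p k hkp, hT1up p i (lt_trans hijlt hjp), zero_mul, add_zero]
      · rw [if_neg hkj, add_zero]
        exact hT1up p k hkp
    · intro p
      simp only []
      by_cases hpj : p = j
      · have hip : i < p := by rw [hpj]; exact hijlt
        rw [if_pos hpj, hT1d, hT1up p i hip, zero_mul, add_zero]
      · rw [if_neg hpj, add_zero]
        exact hT1d p
    · intro a b hab
      simp only []
      rw [hV a b hab, zero_add]
      rcases eq_or_ne a (σ j) with rfl | hne
      · rw [if_pos rfl, hV (σ i) b (lt_trans hlt hab), mul_zero]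
      · rw [if_neg hne]
    · intro a
      simp only []
      rw [hVd a]
      rcases eq_or_ne a (σ j) with rfl | hne
      · rw [if_pos rfl, hV (σ i) (σ j) hlt, mul_zero, add_zero]
      · rw [if_neg hne, add_zero]
    · intro k
      simp only []
      by_cases hki : k = i
      · rw [if_pos hki]
        exact neg_ne_zero.mpr (mul_ne_zero (inv_ne_zero hc) (hu i))
      · rw [if_neg hki]
        by_cases hkj : k = j
        · rw [if_pos hkj]; exact mul_ne_zero hc (hu j)
        · rw [if_neg hkj]; exact hu k
    · intro p q
      simp only []
      rw [hswapA p q]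
      rw [sum_split_pair hij, sum_split_pair hij]
      rw [add_assoc, add_assoc]
      congr 1
      · apply Finset.sum_congr rfl
        intro k hk
        have hkj : k ≠ j := (Finset.mem_erase.mp hk).1
        have hki : k ≠ i := (Finset.mem_erase.mp (Finset.mem_erase.mp hk).2).1
        simp only [hT1def, hθo k hki hkj]
        rw [if_neg hki, sub_zero, if_neg hkj, add_zero, if_neg hki, if_neg hkj,
          if_neg (show σ k ≠ σ j from fun hh => hkj (σ.injective hh)), add_zero]
      · have hgj : T1 p j = T (θ p) i := by
          show T (θ p) (θ j) - (if j = i then T (θ p) (θ j) * c else 0) = T (θ p) i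
          rw [if_neg hji, sub_zero, hθj]
        have hgi : T1 p i = T (θ p) j - T (θ p) i * c := by
          show T (θ p) (θ i) - (if i = i then T (θ p) (θ j) * c else 0)
            = T (θ p) j - T (θ p) i * c
          rw [if_pos rfl, hθi, hθj]
        simp only [hθj, hθi, hgj, hgi, if_true, eq_self_iff_true, if_neg hij, if_neg hji,
          if_neg hne1, add_zero]
        simp only [hwdef, mul_inv_rev, mul_add, add_mul, sub_mul, mul_sub, mul_neg, neg_mul,
          mul_assoc]
        simp only [mul_inv_cancel_left₀ (hu j), inv_mul_cancel_left₀ hc,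
          mul_inv_cancel_left₀ hc]
        abel
    · rw [sum_split_pair hij, sum_split_pair hij (fun k => deg (u k))]
      rw [add_assoc, add_assoc]
      congr 1
      · apply Finset.sum_congr rfl
        intro k hk
        have hkj : k ≠ j := (Finset.mem_erase.mp hk).1
        have hki : k ≠ i := (Finset.mem_erase.mp (Finset.mem_erase.mp hk).2).1
        simp only []
        rw [if_neg hki, if_neg hkj]
      · simp only [if_true, eq_self_iff_true, if_neg hji]
        rw [deg_neg_eq deg hbot hmul, hmul, hmul]
        obtain ⟨g, hg⟩ := WithBot.ne_bot_iff_exists.mp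
          (show deg c ≠ ⊥ from fun hb => hc ((hbot c).mp hb))
        have hci : deg c⁻¹ = ((-g : ℤ) : WithBot ℤ) := by
          rw [hinv c hc, ← hg]; rfl
        rw [hci, ← hg, add_add_add_comm]
        have hzero : ((g : ℤ) : WithBot ℤ) + ((-g : ℤ) : WithBot ℤ) = 0 := by
          rw [← WithBot.coe_add]; norm_num
        rw [hzero, zero_add]

end Adj

section Bubble

variable {n : ℕ}

/-- Bubbling an arbitrary row to the last position. -/
lemma bubble
    (hbot : ∀ a : K, deg a = ⊥ ↔ a = 0)
    (hmul : ∀ a b : K, deg (a * b) = deg a + deg b)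
    (hinv : ∀ a : K, a ≠ 0 → deg a⁻¹ = (deg a).map (fun k : ℤ => -k)) :
    ∀ (k : ℕ) (A T : Fin (n+1) → Fin (n+1) → K) (u : Fin (n+1) → K)
      (V : Fin (n+1) → Fin (n+1) → K) (σ : Equiv.Perm (Fin (n+1))),
      IsDec A T u V σ → ∀ (r : Fin (n+1)), (r : ℕ) + k = n →
    ∃ (ρ : Equiv.Perm (Fin (n+1))) (T' : Fin (n+1) → Fin (n+1) → K)
      (u' : Fin (n+1) → K) (V' : Fin (n+1) → Fin (n+1) → K)
      (σ' : Equiv.Perm (Fin (n+1))),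
      ρ (Fin.last n) = r ∧ IsDec (fun p q => A (ρ p) q) T' u' V' σ' ∧
      ∑ x, deg (u' x) = ∑ x, deg (u x) := by
  intro k
  induction k with
  | zero =>
    intro A T u V σ hdec r hr
    have hrL : r = Fin.last n := Fin.ext (by rw [Fin.val_last]; omega)
    refine ⟨1, T, u, V, σ, ?_, hdec, rfl⟩
    rw [hrL]; rfl
  | succ k ih =>
    intro A T u V σ hdec r hr
    have hrlt : (r : ℕ) < n := by omega
    set r' : Fin (n+1) := ⟨(r : ℕ) + 1, by omega⟩ with hr'def
    obtain ⟨T2, u2, V2, σ2, hdec2, hsum2⟩ :=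
      adj_swap deg hbot hmul hinv hdec (i := r) (j := r') rfl
    obtain ⟨ρ1, T3, u3, V3, σ3, hρ1, hdec3, hsum3⟩ :=
      ih _ _ _ _ _ hdec2 r' (by simp only [hr'def]; omega)
    refine ⟨Equiv.swap r r' * ρ1, T3, u3, V3, σ3, ?_, hdec3, hsum3.trans hsum2⟩
    show Equiv.swap r r' (ρ1 (Fin.last n)) = r
    rw [hρ1, Equiv.swap_apply_right]

end Bubble

/-- Main induction: the sum of the degrees of the diagonal entries of a
Bruhat decomposition is at most `n • c` whenever all entries of the matrix
have degree at most `c`. -/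
lemma key
    (hbot : ∀ a : K, deg a = ⊥ ↔ a = 0)
    (hadd : ∀ a b : K, deg (a + b) ≤ max (deg a) (deg b))
    (hmul : ∀ a b : K, deg (a * b) = deg a + deg b)
    (hinv : ∀ a : K, a ≠ 0 → deg a⁻¹ = (deg a).map (fun k : ℤ => -k)) :
    ∀ (n : ℕ) (c : WithBot ℤ) (A T : Fin n → Fin n → K) (u : Fin n → K)
      (V : Fin n → Fin n → K) (σ : Equiv.Perm (Fin n)),
      IsDec A T u V σ → (∀ p q, deg (A p q) ≤ c) →
      ∑ x, deg (u x) ≤ n • c := by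
  intro n
  induction n with
  | zero =>
    intro c A T u V σ hdec hAd
    simp [zero_nsmul]
  | succ n ih =>
    intro c A T u V σ hdec hAd
    obtain ⟨hT, hTd, hV, hVd, hu, hA⟩ := hdec
    have hdec : IsDec A T u V σ := ⟨hT, hTd, hV, hVd, hu, hA⟩
    set L := Fin.last n with hLdef
    obtain ⟨r, -, hrmax⟩ := Finset.exists_max_image Finset.univ
      (fun p => deg (A p L)) ⟨L, Finset.mem_univ L⟩
    have hkey0 : A (σ⁻¹ L) L = u (σ⁻¹ L) := by
      rw [IsDec.col_last hdec (σ⁻¹ L), hTd, one_mul]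
    have hane : A r L ≠ 0 := by
      intro h0
      have h1 : deg (A (σ⁻¹ L) L) ≤ deg (A r L) := hrmax _ (Finset.mem_univ _)
      rw [h0, (hbot 0).mpr rfl] at h1
      rw [hkey0] at h1
      exact hu _ ((hbot _).mp (le_bot_iff.mp h1))
    obtain ⟨ρ, T2, u2, V2, σ2, hρ, hdec2, hsum2⟩ :=
      bubble deg hbot hmul hinv (n - (r : ℕ)) A T u V σ hdec r
        (by have := r.isLt; omega)
    set B : Fin (n+1) → Fin (n+1) → K := fun p q => A (ρ p) q with hBdef
    have hBd : ∀ p q, deg (B p q) ≤ c := fun p q => hAd _ _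
    have hBmax : ∀ p, deg (B p L) ≤ deg (B L L) := by
      intro p
      show deg (A (ρ p) L) ≤ deg (A (ρ L) L)
      rw [hρ]
      exact hrmax _ (Finset.mem_univ _)
    have ha : B L L ≠ 0 := by
      show A (ρ L) L ≠ 0
      rw [hρ]; exact hane
    set aa : K := B L L with haadef
    have haad : deg aa ≤ c := hBd L L
    have hrowlast : ∀ q, B L q = u2 L * V2 (σ2 L) q := fun q => IsDec.row_last hdec2 q
    -- Step 1: clear the last column above the pivot.
    set A1 : Fin (n+1) → Fin (n+1) → K :=
      fun p q => B p q - (if p = L then 0 else B p L * aa⁻¹ * B L q) with hA1def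
    set T2' : Fin (n+1) → Fin (n+1) → K :=
      fun p k => T2 p k - (if p = L then 0 else if k = L then B p L * aa⁻¹ else 0) with hT2'def
    obtain ⟨hT2, hT2d, hV2, hV2d, hu2, hA2⟩ := hdec2
    have hdec1 : IsDec A1 T2' u2 V2 σ2 := by
      refine ⟨?_, ?_, hV2, hV2d, hu2, ?_⟩
      · intro p k hkp
        simp only [hT2'def]
        by_cases hpL : p = L
        · rw [if_pos hpL, sub_zero]; exact hT2 _ _ hkp
        · rw [if_neg hpL]
          have hkL : k ≠ L := by
            intro h
            rw [h] at hkp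
            exact absurd hkp (not_lt.mpr (Fin.le_last p))
          rw [if_neg hkL, sub_zero]; exact hT2 _ _ hkp
      · intro p
        simp only [hT2'def]
        by_cases hpL : p = L
        · rw [if_pos hpL, sub_zero]; exact hT2d p
        · rw [if_neg hpL, if_neg hpL, sub_zero]; exact hT2d p
      · intro p q
        simp only [hA1def, hT2'def]
        simp only [sub_mul]
        rw [Finset.sum_sub_distrib, ← hA2 p q]
        congr 1
        by_cases hpL : p = L
        · simp [hpL]
        · rw [if_neg hpL]
          simp only [if_neg hpL]
          rw [Finset.sum_eq_single L]
          · rw [if_pos rfl, hrowlast q]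
            simp only [mul_assoc]
          · intro k _ hkL
            rw [if_neg hkL, zero_mul, zero_mul]
          · simp
    have hA1pL : ∀ p, p ≠ L → A1 p L = 0 := by
      intro p hp
      simp only [hA1def]
      rw [if_neg hp, ← haadef, mul_assoc, inv_mul_cancel₀ ha, mul_one, sub_self]
    have hA1Lq : ∀ q, A1 L q = B L q := by
      intro q
      show B L q - (if L = L then 0 else B L L * aa⁻¹ * B L q) = B L q
      rw [if_pos rfl, sub_zero]
    have hA1d : ∀ p q, deg (A1 p q) ≤ c := by
      intro p q
      simp only [hA1def]
      by_cases hpL : p = L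
      · rw [if_pos hpL, sub_zero]; exact hBd p q
      · rw [if_neg hpL]
        exact deg_sub_mul_inv_mul_le deg hbot hadd hmul hinv ha (hBd p q) (hBmax p) (hBd L q)
    -- Step 2: clear the last row left of the pivot.
    set A2f : Fin (n+1) → Fin (n+1) → K :=
      fun p q => A1 p q - (if q = L then 0 else A1 p L * aa⁻¹ * A1 L q) with hA2fdef
    set V2' : Fin (n+1) → Fin (n+1) → K :=
      fun b q => V2 b q - (if q = L then 0 else if b = L then aa⁻¹ * A1 L q else 0) with hV2'def
    have hcol1 : ∀ p, A1 p L = T2' p (σ2⁻¹ L) * u2 (σ2⁻¹ L) := fun p => IsDec.col_last hdec1 p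
    have hT2'up := hdec1.1
    have hT2'd := hdec1.2.1
    have hA1eq := hdec1.2.2.2.2.2
    have hdec2f : IsDec A2f T2' u2 V2' σ2 := by
      refine ⟨hT2'up, hT2'd, ?_, ?_, hu2, ?_⟩
      · intro b q hbq
        simp only [hV2'def]
        by_cases hqL : q = L
        · rw [if_pos hqL, sub_zero]; exact hV2 _ _ hbq
        · rw [if_neg hqL]
          have hbL : b ≠ L := by
            intro h
            rw [h] at hbq
            exact absurd hbq (not_lt.mpr (Fin.le_last q))
          rw [if_neg hbL, sub_zero]; exact hV2 _ _ hbq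
      · intro b
        simp only [hV2'def]
        by_cases hbL : b = L
        · rw [if_pos hbL, sub_zero]; exact hV2d b
        · rw [if_neg hbL, if_neg hbL, sub_zero]; exact hV2d b
      · intro p q
        simp only [hA2fdef, hV2'def]
        simp only [mul_sub]
        rw [Finset.sum_sub_distrib, ← hA1eq p q]
        congr 1
        by_cases hqL : q = L
        · simp [hqL]
        · rw [if_neg hqL]
          simp only [if_neg hqL]
          rw [Finset.sum_eq_single (σ2⁻¹ L)]
          · rw [if_pos (Equiv.Perm.apply_inv_self σ2 L), hcol1 p]
            simp only [mul_assoc]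
          · intro k _ hk
            rw [if_neg (fun hh => hk (by rw [← hh, Equiv.Perm.inv_apply_self])), mul_zero]
          · simp
    have hA2pq : ∀ p q, p ≠ L → A2f p q = A1 p q := by
      intro p q hp
      simp only [hA2fdef]
      by_cases hqL : q = L
      · rw [if_pos hqL, sub_zero]
      · rw [if_neg hqL, hA1pL p hp, zero_mul, zero_mul, sub_zero]
    have hA2pL : ∀ p, p ≠ L → A2f p L = 0 := by
      intro p hp
      rw [hA2pq p L hp]
      exact hA1pL p hp
    have hA2Lq : ∀ q, q ≠ L → A2f L q = 0 := by
      intro q hq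
      simp only [hA2fdef]
      rw [if_neg hq, hA1Lq L, ← haadef, mul_inv_cancel₀ ha, one_mul, sub_self]
    have hA2LL : A2f L L = aa := by
      show A1 L L - (if L = L then 0 else A1 L L * aa⁻¹ * A1 L L) = aa
      rw [if_pos rfl, sub_zero, hA1Lq L, ← haadef]
    have hA2d : ∀ p q, deg (A2f p q) ≤ c := by
      intro p q
      by_cases hp : p = L
      · by_cases hq : q = L
        · rw [hp, hq, hA2LL]; exact haad
        · rw [hp, hA2Lq q hq, (hbot 0).mpr rfl]; exact bot_le
      · rw [hA2pq p q hp]; exact hA1d p q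
    -- Step 3: strip the pivot.
    have hA2eq := hdec2f.2.2.2.2.2
    have hV2'd := hdec2f.2.2.2.1
    have hσL : σ2 L = L := by
      by_contra hne
      have h1 := IsDec.row_last hdec2f (σ2 L)
      rw [hV2'd (σ2 L), mul_one, hA2Lq (σ2 L) hne] at h1
      exact hu2 L h1.symm
    have huL : u2 L = aa := by
      have h1 := IsDec.row_last hdec2f L
      rw [hσL, hV2'd L, mul_one, hA2LL] at h1
      exact h1.symm
    have hinvL : σ2⁻¹ L = L := by
      apply σ2.injective
      rw [Equiv.Perm.apply_inv_self, hσL]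
    have hT2'L : ∀ p, p ≠ L → T2' p L = 0 := by
      intro p hp
      have h1 := IsDec.col_last hdec2f p
      rw [hinvL, huL, hA2pL p hp] at h1
      exact (mul_eq_zero.mp h1.symm).resolve_right ha
    have hσc : ∀ k : Fin n, σ2 (Fin.castSucc k) ≠ L := by
      intro k hk
      have h2 : Fin.castSucc k = L := by
        have h3 := congrArg (⇑σ2⁻¹) hk
        rw [Equiv.Perm.inv_apply_self, hinvL] at h3
        exact h3
      exact absurd h2 (Fin.castSucc_lt_last k).ne
    have hσc' : ∀ k : Fin n, σ2⁻¹ (Fin.castSucc k) ≠ L := by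
      intro k hk
      have h2 : Fin.castSucc k = L := by
        have := congrArg σ2 hk
        rw [Equiv.Perm.apply_inv_self, hσL] at this
        exact this
      exact absurd h2 (Fin.castSucc_lt_last k).ne
    set σ' : Equiv.Perm (Fin n) :=
      { toFun := fun k => (σ2 (Fin.castSucc k)).castPred (hσc k)
        invFun := fun k => (σ2⁻¹ (Fin.castSucc k)).castPred (hσc' k)
        left_inv := by
          intro k
          apply Fin.castSucc_injective
          rw [Fin.castSucc_castPred, Fin.castSucc_castPred, Equiv.Perm.inv_apply_self]
        right_inv := by
          intro k
          apply Fin.castSucc_injective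
          rw [Fin.castSucc_castPred, Fin.castSucc_castPred, Equiv.Perm.apply_inv_self] }
      with hσ'def
    have hσ'c : ∀ k : Fin n, Fin.castSucc (σ' k) = σ2 (Fin.castSucc k) := by
      intro k
      simp only [hσ'def, Equiv.coe_fn_mk]
      rw [Fin.castSucc_castPred]
    have hdec' : IsDec (fun p q => A2f p.castSucc q.castSucc)
        (fun p k => T2' p.castSucc k.castSucc) (fun k => u2 k.castSucc)
        (fun b q => V2' b.castSucc q.castSucc) σ' := by
      refine ⟨?_, fun i => hT2'd _, ?_, fun i => hV2'd _, fun k => hu2 _, ?_⟩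
      · intro p k hkp
        exact hT2'up _ _ (Fin.castSucc_lt_castSucc_iff.mpr hkp)
      · intro b q hbq
        exact hdec2f.2.2.1 _ _ (Fin.castSucc_lt_castSucc_iff.mpr hbq)
      · intro p q
        show A2f p.castSucc q.castSucc = _
        have h1 := hA2eq p.castSucc q.castSucc
        rw [Fin.sum_univ_castSucc] at h1
        rw [hT2'L p.castSucc (Fin.castSucc_lt_last p).ne, zero_mul, zero_mul, add_zero] at h1
        rw [h1]
        apply Finset.sum_congr rfl
        intro k _
        rfl
    have hsum' : ∑ x : Fin n, deg (u2 x.castSucc) ≤ n • c :=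
      ih c _ _ _ _ σ' hdec' (fun p q => hA2d _ _)
    have htot : ∑ x : Fin (n+1), deg (u2 x)
        = (∑ x : Fin n, deg (u2 x.castSucc)) + deg (u2 L) :=
      Fin.sum_univ_castSucc (f := fun x => deg (u2 x))
    calc ∑ x, deg (u x) = ∑ x, deg (u2 x) := hsum2.symm
      _ = (∑ x : Fin n, deg (u2 x.castSucc)) + deg (u2 L) := htot
      _ ≤ n • c + c := add_le_add hsum' (by rw [huL]; exact haad)
      _ = (n + 1) • c := (succ_nsmul c n).symm

end Deg


/-- Over a division ring `K` with a degree function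
`deg : K → WithBot ℤ`: if `A ∈ K^{n×n}` is invertible with all entries of
degree at most `d`, and `A = T * D * P * V` is a Bruhat decomposition
(`T` unit upper triangular, `V` unit lower triangular, `P` a permutation
matrix, `D` diagonal with nonzero diagonal entries), then the degree of the
Dieudonné determinant satisfies `Σ_i deg (D i i) ≤ n·d`. -/
theorem stmt6
    {K : Type*} [DivisionRing K]
    (deg : K → WithBot ℤ)
    (hbot : ∀ a : K, deg a = ⊥ ↔ a = 0)
    (hadd : ∀ a b : K, deg (a + b) ≤ max (deg a) (deg b))
    (hmul : ∀ a b : K, deg (a * b) = deg a + deg b)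
    (hinv : ∀ a : K, a ≠ 0 → deg a⁻¹ = (deg a).map (fun k : ℤ => -k))
    {n : ℕ} (d : ℕ) (A T D P V : Matrix (Fin n) (Fin n) K)
    (hAinv : ∃ B : Matrix (Fin n) (Fin n) K, A * B = 1 ∧ B * A = 1)
    (hAd : ∀ p q : Fin n, deg (A p q) ≤ ((d : ℤ) : WithBot ℤ))
    (hT : ∀ i j : Fin n, j < i → T i j = 0) (hTdiag : ∀ i : Fin n, T i i = 1)
    (hV : ∀ i j : Fin n, i < j → V i j = 0) (hVdiag : ∀ i : Fin n, V i i = 1)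
    (hP : ∃ σ : Equiv.Perm (Fin n), ∀ i j : Fin n, P i j = if σ i = j then 1 else 0)
    (hD : ∀ i j : Fin n, i ≠ j → D i j = 0) (hDdiag : ∀ i : Fin n, D i i ≠ 0)
    (hBruhat : A = T * D * P * V) :
    (∑ i : Fin n, deg (D i i)) ≤ (((n * d : ℕ) : ℤ) : WithBot ℤ) := by
  obtain ⟨σ, hPs⟩ := hP
  have hTD : ∀ p l, (T * D) p l = T p l * D l l := by
    intro p l
    rw [Matrix.mul_apply]
    exact Finset.sum_eq_single l (fun k _ hk => by rw [hD k l hk, mul_zero]) (by simp)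
  have hTDP : ∀ p m, (T * D * P) p m = T p (σ⁻¹ m) * D (σ⁻¹ m) (σ⁻¹ m) := by
    intro p m
    rw [Matrix.mul_apply]
    rw [Finset.sum_eq_single (σ⁻¹ m)]
    · rw [hTD, hPs, if_pos (Equiv.Perm.apply_inv_self σ m), mul_one]
    · intro l _ hl
      rw [hPs, if_neg (fun hh => hl (by rw [← hh, Equiv.Perm.inv_apply_self])), mul_zero]
    · simp
  have hAeq : ∀ p q, A p q = ∑ k, T p k * D k k * V (σ k) q := by
    intro p q
    rw [hBruhat, Matrix.mul_apply]
    rw [show (∑ m, (T * D * P) p m * V m q)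
        = ∑ m, T p (σ⁻¹ m) * D (σ⁻¹ m) (σ⁻¹ m) * V m q from
      Finset.sum_congr rfl fun m _ => by rw [hTDP]]
    rw [← Equiv.sum_comp σ (fun m => T p (σ⁻¹ m) * D (σ⁻¹ m) (σ⁻¹ m) * V m q)]
    apply Finset.sum_congr rfl
    intro k _
    rw [Equiv.Perm.inv_apply_self]
  have hdec : IsDec (K := K) A T (fun k => D k k) V σ :=
    ⟨hT, hTdiag, hV, hVdiag, hDdiag, hAeq⟩
  have hkey := key deg hbot hadd hmul hinv n (((d : ℤ)) : WithBot ℤ) A T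
    (fun k => D k k) V σ hdec hAd
  have hcast : ∀ m : ℕ, m • (((d : ℤ)) : WithBot ℤ) = (((m * d : ℕ) : ℤ) : WithBot ℤ) := by
    intro m
    induction m with
    | zero => simp
    | succ m ihm =>
      rw [succ_nsmul, ihm, ← WithBot.coe_add]
      norm_cast
      ring
  exact hkey.trans (le_of_eq (hcast n))
end

section
/- Let d be a natural number and let A ∈ R^{n×n} have full left row rank with degD A_{ij} ≤ d for all i, j. Let H ∈ R^{n×n} be a Hermite form of A, i.e. U·A = H for some unimodular U ∈ R^{n×n} with H in Hermite form. Then: (a) the sum of the degrees of the diagonal entries of H is at most n·d, i.e. Σ_{i=1}^n degD H_{ii} ≤ n·d; and (b) for every row i, the sum of degD H_{ij} over the nonzero entries H_{ij} in row i is at most n·d. -/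
set_option linter.unusedSectionVars false
set_option maxHeartbeats 1000000

section Aux
variable {R : Type*} [Ring R] [Nontrivial R] [NoZeroDivisors R]
variable (degD : R → WithBot ℕ)
variable (hbot : ∀ r : R, degD r = ⊥ ↔ r = 0)
variable (hmul : ∀ r s : R, degD (r * s) = degD r + degD s)
variable (hadd : ∀ r s : R, degD (r + s) ≤ max (degD r) (degD s))

include hbot hmul in
lemma deg_one : degD (1 : R) = 0 := by
  have h1 : degD (1 : R) ≠ ⊥ := by simp [hbot]
  rcases WithBot.ne_bot_iff_exists.mp h1 with ⟨m, hm⟩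
  have h := hmul 1 1
  rw [one_mul, ← hm] at h
  have : m = m + m := by exact_mod_cast h
  have hm0 : m = 0 := by omega
  rw [← hm, hm0]
  simp

include hbot hmul in
lemma deg_neg (r : R) : degD (-r) = degD r := by
  have hn1 : degD (-1 : R) = 0 := by
    have h1 : degD (-1 : R) ≠ ⊥ := by simp [hbot]
    rcases WithBot.ne_bot_iff_exists.mp h1 with ⟨m, hm⟩
    have h := hmul (-1) (-1)
    rw [neg_mul_neg, one_mul, deg_one degD hbot hmul, ← hm] at h
    have h' : ((m + m : ℕ) : WithBot ℕ) = ((0 : ℕ) : WithBot ℕ) := by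
      push_cast; exact h.symm
    have : m + m = 0 := by exact_mod_cast h'
    have hm0 : m = 0 := by omega
    rw [← hm, hm0]; simp
  calc degD (-r) = degD ((-1 : R) * r) := by rw [neg_one_mul]
  _ = degD r := by rw [hmul, hn1, zero_add]

include hbot in
lemma deg_nonneg {r : R} (hr : r ≠ 0) : (0 : WithBot ℕ) ≤ degD r := by
  have h1 : degD r ≠ ⊥ := by simp [hbot, hr]
  rcases WithBot.ne_bot_iff_exists.mp h1 with ⟨m, hm⟩
  rw [← hm]
  exact le_trans (le_of_eq (by simp)) (WithBot.coe_le_coe.mpr (Nat.zero_le m))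

include hbot hadd in
lemma deg_sum_le {ι : Type*} (s : Finset ι) (f : ι → R) (b : WithBot ℕ)
    (h : ∀ i ∈ s, degD (f i) ≤ b) : degD (∑ i ∈ s, f i) ≤ b := by
  classical
  induction s using Finset.induction_on with
  | empty => simp [(hbot 0).mpr rfl]
  | @insert a s ha ih =>
    rw [Finset.sum_insert ha]
    refine le_trans (hadd _ _) (max_le (h a (Finset.mem_insert_self a s)) ?_)
    exact ih (fun i hi => h i (Finset.mem_insert_of_mem hi))

/-- The subring of elements of degree at most `0`. -/
def Fsub : Subring R where
  carrier := {r | degD r ≤ 0}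
  zero_mem' := by simp [(hbot 0).mpr rfl]
  one_mem' := le_of_eq (deg_one degD hbot hmul)
  add_mem' := fun {a b} ha hb => le_trans (hadd a b) (max_le ha hb)
  mul_mem' := fun {a b} ha hb => by
    rw [Set.mem_setOf_eq] at *
    rw [hmul]
    calc degD a + degD b ≤ 0 + 0 := add_le_add ha hb
    _ = 0 := by simp
  neg_mem' := fun {a} ha => le_of_eq_of_le (deg_neg degD hbot hmul a) ha

end Aux

open Classical in
/-- Degree bounds on the Hermite form: if `A ∈ R^{n×n}`
has full left row rank with all entries of degree at most `d`, and
`H = U·A` is a Hermite form of `A` (`U` unimodular), then (a) the sum of the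
degrees of the diagonal entries of `H` is at most `n·d`, and (b) in every
row of `H` the sum of the degrees of the nonzero entries is at most `n·d`. -/
theorem stmt9
    {R : Type*} [Ring R] [Nontrivial R] [NoZeroDivisors R]
    (degD : R → WithBot ℕ)
    (hbot : ∀ r : R, degD r = ⊥ ↔ r = 0)
    (hmul : ∀ r s : R, degD (r * s) = degD r + degD s)
    (hadd : ∀ r s : R, degD (r + s) ≤ max (degD r) (degD s))
    (hunit : ∀ r : R, degD r = 0 → IsUnit r)
    (hdivision : ∀ f g : R, g ≠ 0 → ∃ q rem : R, f = q * g + rem ∧ degD rem < degD g)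
    {n : ℕ} (d : ℕ) (A U H : Matrix (Fin n) (Fin n) R)
    (hrank : ∀ b : Fin n → R, Matrix.vecMul b A = 0 → b = 0)
    (hAd : ∀ i j : Fin n, degD (A i j) ≤ ((d : ℕ) : WithBot ℕ))
    (hUuni : ∃ V : Matrix (Fin n) (Fin n) R, U * V = 1 ∧ V * U = 1)
    (hHut : ∀ i j : Fin n, j < i → H i j = 0)
    (hHdiag : ∀ i : Fin n, H i i ≠ 0)
    (hHdeg : ∀ i j : Fin n, i < j → degD (H i j) < degD (H j j))
    (hUA : U * A = H) :
    (∑ i : Fin n, degD (H i i)) ≤ ((n * d : ℕ) : WithBot ℕ) ∧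
    (∀ i : Fin n,
      (∑ j ∈ Finset.univ.filter (fun j : Fin n => H i j ≠ 0), degD (H i j)) ≤
        ((n * d : ℕ) : WithBot ℕ)) := by
  classical
  -- Part (b) follows from part (a).
  suffices key : (∑ i : Fin n, degD (H i i)) ≤ ((n * d : ℕ) : WithBot ℕ) by
    refine ⟨key, fun i => ?_⟩
    calc (∑ j ∈ Finset.univ.filter (fun j : Fin n => H i j ≠ 0), degD (H i j))
        ≤ ∑ j ∈ Finset.univ.filter (fun j : Fin n => H i j ≠ 0), degD (H j j) := by
          refine Finset.sum_le_sum (fun j hj => ?_)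
          have hij : H i j ≠ 0 := (Finset.mem_filter.mp hj).2
          rcases lt_trichotomy i j with h | h | h
          · exact le_of_lt (hHdeg i j h)
          · rw [h]
          · exact absurd (hHut i j h) hij
      _ ≤ ∑ j : Fin n, degD (H j j) := by
          refine Finset.sum_le_sum_of_subset_of_nonneg (Finset.filter_subset _ _)
            (fun j _ _ => deg_nonneg degD hbot (hHdiag j))
      _ ≤ _ := key
  -- trivial case : all nonzero elements have degree `0`
  by_cases hDR : ∀ r : R, r ≠ 0 → degD r = 0
  · have hz : ∀ i : Fin n, degD (H i i) = (0 : WithBot ℕ) := fun i => hDR _ (hHdiag i)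
    calc (∑ i : Fin n, degD (H i i)) = ∑ _i : Fin n, (0 : WithBot ℕ) := by
          exact Finset.sum_congr rfl (fun i _ => hz i)
      _ = 0 := by simp
      _ ≤ _ := by
          exact le_trans (le_of_eq (by simp)) (WithBot.coe_le_coe.mpr (Nat.zero_le (n*d)))
  -- main case
  push_neg at hDR
  obtain ⟨r0, hr0, hr0d⟩ := hDR
  have hr0b : degD r0 ≠ ⊥ := by simp [hbot, hr0]
  obtain ⟨m0, hm0⟩ := WithBot.ne_bot_iff_exists.mp hr0b
  have hm0pos : 0 < m0 := by
    rcases Nat.eq_zero_or_pos m0 with h | h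
    · exfalso; apply hr0d; rw [← hm0, h]; simp
    · exact h
  have hS : ∃ k : ℕ, 0 < k ∧ ∃ r : R, degD r = (k : WithBot ℕ) :=
    ⟨m0, hm0pos, r0, hm0.symm⟩
  set e := Nat.find hS with he_def
  obtain ⟨hepos, g, hge⟩ := Nat.find_spec hS
  have hmin : ∀ k : ℕ, k < e → ¬(0 < k ∧ ∃ r : R, degD r = (k : WithBot ℕ)) :=
    fun k hk => Nat.find_min hS hk
  have hg0 : g ≠ 0 := by
    intro h; rw [h, (hbot 0).mpr rfl] at hge; exact (WithBot.bot_ne_coe) hge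
  -- degrees of powers of g
  have hpow : ∀ i : ℕ, degD (g ^ i) = ((i * e : ℕ) : WithBot ℕ) := by
    intro i
    induction i with
    | zero => simpa using deg_one degD hbot hmul
    | succ i ih =>
      rw [pow_succ, hmul, ih, hge]
      push_cast
      ring
  have hgpow0 : ∀ i : ℕ, g ^ i ≠ 0 := fun i => pow_ne_zero i hg0
  -- every degree is a multiple of e
  have hdvd : ∀ r : R, r ≠ 0 → ∃ k : ℕ, degD r = ((e * k : ℕ) : WithBot ℕ) := by
    intro r hr
    have hrb : degD r ≠ ⊥ := by simp [hbot, hr]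
    obtain ⟨m, hm⟩ := WithBot.ne_bot_iff_exists.mp hrb
    have hdm : e * (m / e) + m % e = m := Nat.div_add_mod m e
    have hmodlt : m % e < e := Nat.mod_lt m hepos
    refine ⟨m / e, ?_⟩
    rcases Nat.eq_zero_or_pos (m % e) with hs | hs
    · have hme : m = e * (m / e) := by omega
      rw [← hm, ← hme]
      norm_cast
    · exfalso
      set a := m / e with ha
      have hcomm : a * e = e * a := Nat.mul_comm a e
      obtain ⟨q, rem, hqr, hrem⟩ := hdivision r (g ^ a) (hgpow0 a)
      rw [hpow a] at hrem
      have haem : a * e ≤ m := by omega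
      have hq0 : q ≠ 0 := by
        intro h
        rw [h, zero_mul, zero_add] at hqr
        rw [← hqr, ← hm] at hrem
        have : m < a * e := WithBot.coe_lt_coe.mp hrem
        omega
      have hsub : degD (q * g ^ a) ≤ (m : WithBot ℕ) := by
        have hrw : q * g ^ a = r + (- rem) := by rw [hqr]; abel
        rw [hrw]
        refine le_trans (hadd _ _) (max_le (le_of_eq hm.symm) ?_)
        rw [deg_neg degD hbot hmul]
        exact le_trans (le_of_lt hrem) (WithBot.coe_le_coe.mpr haem)
      have hge' : (m : WithBot ℕ) ≤ degD (q * g ^ a) := by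
        have h2 : degD r ≤ max (degD (q * g ^ a)) (degD rem) := by
          rw [hqr]; exact hadd _ _
        rw [← hm] at h2
        rcases max_cases (degD (q * g ^ a)) (degD rem) with ⟨hmx, _⟩ | ⟨hmx, _⟩
        · rw [hmx] at h2; exact h2
        · rw [hmx] at h2
          exact absurd (lt_of_le_of_lt h2
            (lt_of_lt_of_le hrem (WithBot.coe_le_coe.mpr haem))) (lt_irrefl _)
      have heq : degD (q * g ^ a) = (m : WithBot ℕ) := le_antisymm hsub hge'
      rw [hmul, hpow a] at heq
      have hqb : degD q ≠ ⊥ := by simp [hbot, hq0]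
      obtain ⟨u, hu⟩ := WithBot.ne_bot_iff_exists.mp hqb
      rw [← hu] at heq
      have hu' : u + a * e = m := by
        have := WithBot.coe_inj.mp heq
        exact_mod_cast this
      have hus : u = m % e := by omega
      exact hmin u (by omega) ⟨by omega, q, hu.symm⟩
  -- representation by powers of g with coefficients of degree ≤ 0
  have hrepr : ∀ (s : ℕ) (r : R), degD r ≤ ((e * s : ℕ) : WithBot ℕ) →
      ∃ c : Fin (s+1) → R, (∀ i, degD (c i) ≤ 0) ∧
        r = ∑ i : Fin (s+1), c i * g ^ (i : ℕ) := by
    intro s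
    induction s with
    | zero =>
      intro r hr
      refine ⟨fun _ => r, fun i => by simpa using hr, ?_⟩
      simp
    | succ s ih =>
      intro r hr
      obtain ⟨q, rem, hqr, hrem⟩ := hdivision r g hg0
      rw [hge] at hrem
      have hrem0 : degD rem ≤ 0 := by
        rcases eq_or_ne rem 0 with h | h
        · rw [h, (hbot 0).mpr rfl]; exact bot_le
        · obtain ⟨k, hk⟩ := hdvd rem h
          rw [hk] at hrem ⊢
          have hlt : e * k < e := by exact_mod_cast hrem
          have hk0 : k = 0 := by
            by_contra hk0
            have : e ≤ e * k := Nat.le_mul_of_pos_right e (Nat.pos_of_ne_zero hk0)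
            omega
          simp [hk0]
      have hq : degD q ≤ ((e * s : ℕ) : WithBot ℕ) := by
        rcases eq_or_ne q 0 with h | h
        · rw [h, (hbot 0).mpr rfl]; exact bot_le
        · have hqg : degD (q * g) ≤ ((e * (s+1) : ℕ) : WithBot ℕ) := by
            have hrw : q * g = r + (-rem) := by rw [hqr]; abel
            rw [hrw]
            refine le_trans (hadd _ _) (max_le hr ?_)
            rw [deg_neg degD hbot hmul]
            refine le_trans hrem0 ?_
            exact le_trans (le_of_eq (by simp)) (WithBot.coe_le_coe.mpr (Nat.zero_le _))
          rw [hmul, hge] at hqg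
          obtain ⟨u, hu⟩ := WithBot.ne_bot_iff_exists.mp
            (show degD q ≠ ⊥ by simp [hbot, h])
          rw [← hu] at hqg ⊢
          have h1 : ((u + e : ℕ) : WithBot ℕ) ≤ ((e * (s+1) : ℕ) : WithBot ℕ) := by
            push_cast
            push_cast at hqg
            exact hqg
          have h2 : u + e ≤ e * (s+1) := by exact_mod_cast h1
          have h3 : e * (s + 1) = e * s + e := by ring
          have h4 : u ≤ e * s := by omega
          exact WithBot.coe_le_coe.mpr h4

      obtain ⟨c', hc'deg, hc'⟩ := ih q hq
      refine ⟨fun i => Fin.cases rem (fun j => c' j) i, ?_, ?_⟩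
      · intro i
        refine Fin.cases ?_ ?_ i
        · simpa using hrem0
        · intro j; simpa using hc'deg j
      · rw [Fin.sum_univ_succ]
        simp only [Fin.cases_zero, Fin.cases_succ, Fin.val_zero, pow_zero, mul_one]
        have hstep : (∑ j : Fin (s+1), c' j * g ^ ((j.succ : Fin (s+2)) : ℕ))
            = (∑ j : Fin (s+1), c' j * g ^ (j : ℕ)) * g := by
          rw [Finset.sum_mul]
          refine Finset.sum_congr rfl (fun j _ => ?_)
          simp [Fin.val_succ, pow_succ, mul_assoc]
        rw [hstep, ← hc', hqr]
        abel
  -- linear independence of powers of g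
  have hindep : ∀ (s : ℕ) (c : Fin s → R), (∀ i, degD (c i) ≤ 0) →
      (∑ i : Fin s, c i * g ^ (i : ℕ)) = 0 → ∀ i, c i = 0 := by
    intro s
    induction s with
    | zero => intro c _ _ i; exact i.elim0
    | succ s ih =>
      intro c hc hsum i
      rw [Fin.sum_univ_succ] at hsum
      simp only [Fin.val_zero, pow_zero, mul_one] at hsum
      have hstep : (∑ j : Fin s, c j.succ * g ^ ((j.succ : Fin (s+1)) : ℕ))
          = (∑ j : Fin s, c j.succ * g ^ (j : ℕ)) * g := by
        rw [Finset.sum_mul]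
        refine Finset.sum_congr rfl (fun j _ => ?_)
        simp [Fin.val_succ, pow_succ, mul_assoc]
      rw [hstep] at hsum
      set q := ∑ j : Fin s, c j.succ * g ^ (j : ℕ) with hqdef
      have hq0 : q = 0 := by
        by_contra h
        have h1 : c 0 = -(q * g) := by
          have := eq_neg_of_add_eq_zero_left hsum
          exact this
        have hdq : degD (c 0) = degD q + (e : WithBot ℕ) := by
          rw [h1, deg_neg degD hbot hmul, hmul, hge]
        obtain ⟨u, hu⟩ := WithBot.ne_bot_iff_exists.mp
          (show degD q ≠ ⊥ by simp [hbot, h])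
        rw [← hu] at hdq
        have hle : degD (c 0) ≤ 0 := hc 0
        rw [hdq] at hle
        have h2 : ((u + e : ℕ) : WithBot ℕ) ≤ ((0 : ℕ) : WithBot ℕ) := by
          push_cast
          exact hle
        have h3 : u + e ≤ 0 := by exact_mod_cast h2
        omega
      rw [hq0, zero_mul, add_zero] at hsum
      have hrest := ih (fun j => c j.succ) (fun j => hc _) hq0
      refine Fin.cases ?_ ?_ i
      · exact hsum
      · exact hrest
  -- the key triangularity lemma
  have hL1 : ∀ c : Fin n → R,
      (∀ j, degD ((Matrix.vecMul c H) j) < degD (H j j)) → c = 0 := by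
    intro c hc
    have hstep : ∀ m : ℕ, ∀ j : Fin n, (j : ℕ) = m → c j = 0 := by
      intro m
      induction m using Nat.strong_induction_on with
      | _ m IH =>
        intro j hj
        have hrow : Matrix.vecMul c H j = c j * H j j := by
          have hvm : Matrix.vecMul c H j = ∑ k, c k * H k j := by
            simp [Matrix.vecMul, dotProduct]
          rw [hvm]
          refine Finset.sum_eq_single j (fun k _ hk => ?_)
            (fun hcon => absurd (Finset.mem_univ j) hcon)
          rcases lt_or_gt_of_ne hk with h | h
          · rw [IH (k : ℕ) (by rw [← hj]; exact h) k rfl, zero_mul]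
          · rw [hHut k j h, mul_zero]
        rcases eq_or_ne (c j) 0 with h | h
        · exact h
        · exfalso
          have hlt := hc j
          rw [hrow, hmul] at hlt
          have h2 : degD (H j j) ≤ degD (c j) + degD (H j j) :=
            le_add_of_nonneg_left (deg_nonneg degD hbot h)
          exact absurd (lt_of_le_of_lt h2 hlt) (lt_irrefl _)
    funext j
    exact hstep (j : ℕ) j rfl
  -- set up the division ring F
  set F := Fsub degD hbot hmul hadd with hF
  haveI : Nontrivial F := ⟨⟨0, 1, by simp [Subtype.ext_iff]⟩⟩
  have hdeg0 : ∀ x : F, (x : R) ≠ 0 → degD (x : R) = 0 := by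
    intro x hx
    have h1 : degD (x : R) ≠ ⊥ := by simp [hbot, hx]
    rcases WithBot.ne_bot_iff_exists.mp h1 with ⟨m, hm⟩
    have hle : degD (x : R) ≤ 0 := x.2
    rw [← hm] at hle ⊢
    have h2 : (m : WithBot ℕ) ≤ ((0:ℕ) : WithBot ℕ) := by simpa using hle
    have : m ≤ 0 := WithBot.coe_le_coe.mp h2
    simp [Nat.le_zero.mp this]
  letI : DivisionRing F := DivisionRing.ofIsUnitOrEqZero (by
    intro a
    rcases eq_or_ne a 0 with h | h
    · exact Or.inr h
    · left
      have hane : (a : R) ≠ 0 := fun hh => h (Subtype.ext hh)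
      obtain ⟨u, hu⟩ := hunit _ (hdeg0 a hane)
      have hinv : degD ((u⁻¹ : Rˣ) : R) ≤ 0 := by
        have h1 : degD ((u : R) * ((u⁻¹ : Rˣ) : R)) = 0 := by
          rw [Units.mul_inv]; exact deg_one degD hbot hmul
        rw [hmul] at h1
        have hu0 : degD (u : R) = 0 := by rw [hu]; exact hdeg0 a hane
        rw [hu0, zero_add] at h1
        exact le_of_eq h1
      refine ⟨⟨⟨(a : R), a.2⟩, ⟨((u⁻¹ : Rˣ) : R), hinv⟩, ?_, ?_⟩, ?_⟩
      · ext; show (a : R) * _ = 1; rw [← hu]; exact Units.mul_inv u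
      · ext; show _ * (a : R) = 1; rw [← hu]; exact Units.inv_mul u
      · ext; rfl)
  letI : Module F R := Module.compHom R (F.subtype)
  have hsmul : ∀ (c : F) (r : R), c • r = (c : R) * r := fun _ _ => rfl
  -- the pivot degrees
  have ht : ∀ j : Fin n, ∃ k : ℕ, degD (H j j) = ((e * k : ℕ) : WithBot ℕ) :=
    fun j => hdvd _ (hHdiag j)
  set t : Fin n → ℕ := fun j => Classical.choose (ht j) with ht_def
  have htt : ∀ j, degD (H j j) = ((e * t j : ℕ) : WithBot ℕ) :=
    fun j => Classical.choose_spec (ht j)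
  set N : ℕ := Finset.univ.sup t with hN_def
  have htN : ∀ j, t j ≤ N := fun j => Finset.le_sup (Finset.mem_univ j)
  set de : ℕ := d / e with hde_def
  have hA' : ∀ j k : Fin n, degD (A j k) ≤ ((e * de : ℕ) : WithBot ℕ) := by
    intro j k
    rcases eq_or_ne (A j k) 0 with h | h
    · rw [h, (hbot 0).mpr rfl]; exact bot_le
    · obtain ⟨m', hm'⟩ := hdvd _ h
      rw [hm']
      have h1 : ((e * m' : ℕ) : WithBot ℕ) ≤ ((d : ℕ) : WithBot ℕ) := hm' ▸ hAd j k
      have h2 : e * m' ≤ d := by exact_mod_cast h1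
      have h3 : m' ≤ de := by
        rw [hde_def]
        exact (Nat.le_div_iff_mul_le hepos).mpr (Nat.mul_comm e m' ▸ h2)
      exact_mod_cast Nat.mul_le_mul_left e h3
  -- the model family and the main family
  set model : Fin n × Fin (N + de + 1) → (Fin n → R) :=
    fun p => Pi.single p.1 (g ^ (p.2 : ℕ)) with hmodel_def
  set v : ((Σ j : Fin n, Fin (t j)) ⊕ (Fin n × Fin (N + 1))) → (Fin n → R) :=
    Sum.elim (fun p => Pi.single p.1 (g ^ (p.2 : ℕ)))
      (fun p => fun k => g ^ (p.2 : ℕ) * A p.1 k) with hv_def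
  -- membership of the family in the span of the model
  have hspan : ∀ u : Fin n → R, (∀ k, degD (u k) ≤ ((e * (N + de) : ℕ) : WithBot ℕ)) →
      u ∈ Submodule.span F (Set.range model) := by
    intro u hu
    have hrepru : ∀ k, ∃ c : Fin (N + de + 1) → R, (∀ l, degD (c l) ≤ 0) ∧
        u k = ∑ l : Fin (N + de + 1), c l * g ^ (l : ℕ) := fun k => hrepr (N + de) (u k) (hu k)
    choose cc hccdeg hcc using hrepru
    have hu_eq : u = ∑ k : Fin n, ∑ l : Fin (N + de + 1),
        (⟨cc k l, hccdeg k l⟩ : F) • model (k, l) := by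
      funext m
      rw [Finset.sum_apply]
      have hterm : ∀ k : Fin n, (∑ l : Fin (N + de + 1),
          (⟨cc k l, hccdeg k l⟩ : F) • model (k, l)) m
          = if m = k then ∑ l : Fin (N + de + 1), cc k l * g ^ (l : ℕ) else 0 := by
        intro k
        rw [Finset.sum_apply]
        have : ∀ l : Fin (N + de + 1), ((⟨cc k l, hccdeg k l⟩ : F) • model (k, l)) m
            = if m = k then cc k l * g ^ (l : ℕ) else 0 := by
          intro l
          have e1 : ((⟨cc k l, hccdeg k l⟩ : F) • model (k, l)) m
              = cc k l * ((Pi.single k (g ^ (l : ℕ)) : Fin n → R) m) := rfl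
          rw [e1, Pi.single_apply]
          split <;> simp
        rw [Finset.sum_congr rfl (fun l _ => this l)]
        split <;> simp
      rw [Finset.sum_congr rfl (fun k _ => hterm k), Finset.sum_ite_eq]
      simp [hcc m]
    rw [hu_eq]
    exact Submodule.sum_mem _ (fun k _ => Submodule.sum_mem _ (fun l _ =>
      Submodule.smul_mem _ _ (Submodule.subset_span ⟨(k, l), rfl⟩)))
  have hmem : ∀ x, v x ∈ Submodule.span F (Set.range model) := by
    intro x
    refine hspan _ ?_
    cases x with
    | inl p =>
      obtain ⟨j0, i0⟩ := p
      intro k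
      rw [hv_def]
      simp only [Sum.elim_inl]
      rw [Pi.single_apply]
      split
      · rw [hpow]
        have h1 : (i0 : ℕ) * e ≤ e * (N + de) := by
          have h2 : (i0 : ℕ) < t j0 := i0.2
          have h3 : t j0 ≤ N := htN j0
          calc (i0 : ℕ) * e = e * (i0 : ℕ) := Nat.mul_comm _ _
          _ ≤ e * (N + de) := Nat.mul_le_mul_left e
            (le_trans (Nat.le_of_lt (lt_of_lt_of_le h2 h3)) (Nat.le_add_right N de))
        exact WithBot.coe_le_coe.mpr h1
      · rw [(hbot 0).mpr rfl]; exact bot_le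
    | inr p =>
      obtain ⟨j0, i0⟩ := p
      intro k
      rw [hv_def]
      simp only [Sum.elim_inr]
      rw [hmul, hpow]
      calc (((i0 : ℕ) * e : ℕ) : WithBot ℕ) + degD (A j0 k)
          ≤ (((i0 : ℕ) * e : ℕ) : WithBot ℕ) + ((e * de : ℕ) : WithBot ℕ) := by
            exact add_le_add_right (hA' j0 k) _
        _ = (((i0 : ℕ) * e + e * de : ℕ) : WithBot ℕ) := by push_cast; ring
        _ ≤ ((e * (N + de) : ℕ) : WithBot ℕ) := by
            refine WithBot.coe_le_coe.mpr ?_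
            have h2 : (i0 : ℕ) ≤ N := by
              have := i0.2
              omega
            calc (i0 : ℕ) * e + e * de ≤ N * e + e * de :=
              Nat.add_le_add_right (Nat.mul_le_mul_right e h2) _
            _ = e * (N + de) := by ring
  -- linear independence of the family
  have hli : LinearIndependent F v := by
    rw [Fintype.linearIndependent_iff]
    intro c hc
    set b : Fin n → R :=
      fun k => ∑ i : Fin (N+1), ((c (Sum.inr (k, i)) : R) * g ^ (i : ℕ)) with hb_def
    set w : Fin n → R :=
      fun k => ∑ i : Fin (t k), ((c (Sum.inl ⟨k, i⟩) : R) * g ^ (i : ℕ)) with hw_def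
    have hsplit : ∀ k, w k + Matrix.vecMul b A k = 0 := by
      intro k
      have h0 : (∑ x, c x • v x) k = 0 := by rw [hc]; rfl
      rw [Finset.sum_apply] at h0
      rw [Fintype.sum_sum_type] at h0
      have h1 : (∑ p : (Σ j : Fin n, Fin (t j)), (c (Sum.inl p) • v (Sum.inl p)) k) = w k := by
        rw [← Finset.univ_sigma_univ, Finset.sum_sigma]
        have hterm : ∀ j : Fin n, (∑ i : Fin (t j), (c (Sum.inl ⟨j, i⟩) • v (Sum.inl ⟨j, i⟩)) k)
            = if k = j then ∑ i : Fin (t j), ((c (Sum.inl ⟨j, i⟩) : R) * g ^ (i : ℕ)) else 0 := by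
          intro j
          have he : ∀ i : Fin (t j), (c (Sum.inl ⟨j, i⟩) • v (Sum.inl ⟨j, i⟩)) k
              = if k = j then (c (Sum.inl ⟨j, i⟩) : R) * g ^ (i : ℕ) else 0 := by
            intro i
            have e1 : (c (Sum.inl ⟨j, i⟩) • v (Sum.inl ⟨j, i⟩)) k
                = (c (Sum.inl ⟨j, i⟩) : R) * ((Pi.single j (g ^ (i : ℕ)) : Fin n → R) k) := rfl
            rw [e1, Pi.single_apply]
            split <;> simp
          rw [Finset.sum_congr rfl (fun i _ => he i)]
          split <;> simp
        rw [Finset.sum_congr rfl (fun j _ => hterm j), Finset.sum_ite_eq]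
        simp [hw_def]
      have h2 : (∑ p : Fin n × Fin (N+1), (c (Sum.inr p) • v (Sum.inr p)) k)
          = Matrix.vecMul b A k := by
        rw [Fintype.sum_prod_type]
        have hvm : Matrix.vecMul b A k = ∑ j, b j * A j k := by
          simp [Matrix.vecMul, dotProduct]
        rw [hvm]
        refine Finset.sum_congr rfl (fun j _ => ?_)
        simp only [hb_def]
        rw [Finset.sum_mul]
        refine Finset.sum_congr rfl (fun i _ => ?_)
        have e1 : (c (Sum.inr (j, i)) • v (Sum.inr (j, i))) k
            = (c (Sum.inr (j, i)) : R) * (g ^ (i : ℕ) * A j k) := rfl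
        rw [e1, mul_assoc]
      rw [h1, h2] at h0
      exact h0
    obtain ⟨V, hUV, hVU⟩ := hUuni
    have hAVH : A = V * H := by rw [← hUA, ← Matrix.mul_assoc, hVU, Matrix.one_mul]
    have hw2 : w = Matrix.vecMul (Matrix.vecMul (-b) V) H := by
      funext k
      have h3 : w k = - Matrix.vecMul b A k := eq_neg_of_add_eq_zero_left (hsplit k)
      rw [Matrix.vecMul_vecMul, ← hAVH, Matrix.neg_vecMul, Pi.neg_apply, h3]
    have hwdeg : ∀ j, degD (w j) < degD (H j j) := by
      intro j
      rw [htt j]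
      rcases Nat.eq_zero_or_pos (t j) with h | h
      · have hempty : (Finset.univ : Finset (Fin (t j))) = ∅ := by
          refine Finset.univ_eq_empty_iff.mpr ?_
          rw [h]
          exact Fin.isEmpty
        have hwj : w j = 0 := by simp only [hw_def]; rw [hempty, Finset.sum_empty]
        rw [hwj, (hbot 0).mpr rfl]
        exact WithBot.bot_lt_coe _
      · have hb1 : degD (w j) ≤ ((e * t j - 1 : ℕ) : WithBot ℕ) := by
          simp only [hw_def]
          refine deg_sum_le degD hbot hadd _ _ _ (fun i _ => ?_)
          rw [hmul, hpow]
          have hc2 : degD ((c (Sum.inl ⟨j, i⟩) : R)) ≤ 0 := (c (Sum.inl ⟨j, i⟩)).2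
          calc degD ((c (Sum.inl ⟨j, i⟩) : R)) + (((i : ℕ) * e : ℕ) : WithBot ℕ)
              ≤ 0 + (((i : ℕ) * e : ℕ) : WithBot ℕ) := add_le_add_left hc2 _
            _ = (((i : ℕ) * e : ℕ) : WithBot ℕ) := zero_add _
            _ ≤ ((e * t j - 1 : ℕ) : WithBot ℕ) := by
                refine WithBot.coe_le_coe.mpr ?_
                have h2 : (i : ℕ) < t j := i.2
                have h3 : (i : ℕ) * e ≤ (t j - 1) * e := Nat.mul_le_mul_right e (by omega)
                refine le_trans h3 ?_
                have h4 : (t j - 1) * e + e = t j * e := by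
                  have h5 : t j - 1 + 1 = t j := by omega
                  calc (t j - 1) * e + e = (t j - 1 + 1) * e := by ring
                  _ = t j * e := by rw [h5]
                have h6 : t j * e = e * t j := Nat.mul_comm _ _
                have h8 : 1 ≤ e := hepos
                have h9 : (t j - 1) * e + 1 ≤ (t j - 1) * e + e := Nat.add_le_add_left h8 _
                rw [h4, h6] at h9
                exact Nat.le_sub_one_of_lt h9
        refine lt_of_le_of_lt hb1 (WithBot.coe_lt_coe.mpr ?_)
        have h7 : 0 < e * t j := Nat.mul_pos hepos h
        exact Nat.sub_lt h7 Nat.one_pos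
    have hcoef : Matrix.vecMul (-b) V = 0 := by
      refine hL1 _ (fun j => ?_)
      have := hwdeg j
      rw [hw2] at this
      exact this
    have hw0 : w = 0 := by rw [hw2, hcoef, Matrix.zero_vecMul]
    have hbA : Matrix.vecMul b A = 0 := by
      funext k
      have h8 := hsplit k
      rw [congrFun hw0 k, Pi.zero_apply, zero_add] at h8
      exact h8
    have hb0 : b = 0 := hrank b hbA
    intro x
    cases x with
    | inl p =>
      obtain ⟨j, i⟩ := p
      have hwj : (∑ i : Fin (t j), ((c (Sum.inl ⟨j, i⟩) : R) * g ^ (i : ℕ))) = 0 := by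
        have h9 := congrFun hw0 j
        rw [Pi.zero_apply] at h9
        simp only [hw_def] at h9
        exact h9
      have := hindep (t j) (fun i => (c (Sum.inl ⟨j, i⟩) : R))
        (fun i => (c (Sum.inl ⟨j, i⟩)).2) hwj i
      exact Subtype.ext this
    | inr p =>
      obtain ⟨j, i⟩ := p
      have hbj : (∑ i : Fin (N+1), ((c (Sum.inr (j, i)) : R) * g ^ (i : ℕ))) = 0 := by
        have h9 := congrFun hb0 j
        rw [Pi.zero_apply] at h9
        simp only [hb_def] at h9
        exact h9
      have := hindep (N+1) (fun i => (c (Sum.inr (j, i)) : R))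
        (fun i => (c (Sum.inr (j, i))).2) hbj i
      exact Subtype.ext this
  -- the counting argument
  have hcount : (∑ j : Fin n, t j) + n * (N + 1) ≤ n * (N + de + 1) := by
    set W := Submodule.span F (Set.range model) with hW_def
    haveI : Module.Finite F W := Module.Finite.span_of_finite F (Set.finite_range model)
    set v' : ((Σ j : Fin n, Fin (t j)) ⊕ (Fin n × Fin (N + 1))) → W :=
      fun x => ⟨v x, hmem x⟩ with hv'_def
    have hli' : LinearIndependent F v' := by
      apply LinearIndependent.of_comp W.subtype
      exact hli
    have h1 : Fintype.card ((Σ j : Fin n, Fin (t j)) ⊕ (Fin n × Fin (N + 1)))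
        ≤ Module.finrank F W := hli'.fintype_card_le_finrank
    have h2 : Module.finrank F W ≤ Fintype.card (Fin n × Fin (N + de + 1)) := by
      have h3 := finrank_range_le_card (R := F) model
      rw [Set.finrank] at h3
      exact h3
    have h4 : Fintype.card ((Σ j : Fin n, Fin (t j)) ⊕ (Fin n × Fin (N + 1)))
        = (∑ j : Fin n, t j) + n * (N + 1) := by
      rw [Fintype.card_sum, Fintype.card_sigma, Fintype.card_prod]
      simp [Fintype.card_fin]
    have h5 : Fintype.card (Fin n × Fin (N + de + 1)) = n * (N + de + 1) := by
      rw [Fintype.card_prod]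
      simp [Fintype.card_fin]
    rw [h4] at h1
    rw [h5] at h2
    exact le_trans h1 h2
  have hsum_t : (∑ j : Fin n, t j) ≤ n * de := by
    have h1 : n * (N + de + 1) = n * de + n * (N + 1) := by ring
    rw [h1] at hcount
    omega
  -- conclude
  have hfinal : e * (∑ j : Fin n, t j) ≤ n * d := by
    calc e * (∑ j : Fin n, t j) ≤ e * (n * de) := Nat.mul_le_mul_left e hsum_t
    _ = n * (e * de) := by ring
    _ ≤ n * d := by
        refine Nat.mul_le_mul_left n ?_
        rw [hde_def, mul_comm]
        exact Nat.div_mul_le_self d e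
  calc (∑ i : Fin n, degD (H i i)) = ∑ i : Fin n, ((e * t i : ℕ) : WithBot ℕ) :=
        Finset.sum_congr rfl (fun i _ => htt i)
    _ = ((∑ i : Fin n, e * t i : ℕ) : WithBot ℕ) := by
        rw [Nat.cast_sum]
    _ = ((e * ∑ i : Fin n, t i : ℕ) : WithBot ℕ) := by
        rw [Finset.mul_sum]
    _ ≤ ((n * d : ℕ) : WithBot ℕ) := by
        exact_mod_cast hfinal
end

section
/- Let H ∈ K^{n×n} be upper triangular and invertible, with every entry of H either zero or of nonnegative degree, and with deg H_{ij} < deg H_{jj} whenever i < j. Let J = H⁻¹ ∈ K^{n×n}. Then deg J_{ij} ≤ 0 for all i, j ∈ {1,…,n}. -/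
/-- Over a division ring `K` with a degree function
`deg : K → WithBot ℤ`: if `H ∈ K^{n×n}` is upper triangular and invertible,
with every entry zero or of nonnegative degree and `deg H_{ij} < deg H_{jj}`
for `i < j`, then every entry of `J = H⁻¹` has degree at most `0`. -/
theorem stmt10
    {K : Type*} [DivisionRing K]
    (deg : K → WithBot ℤ)
    (hbot : ∀ a : K, deg a = ⊥ ↔ a = 0)
    (hadd : ∀ a b : K, deg (a + b) ≤ max (deg a) (deg b))
    (hmul : ∀ a b : K, deg (a * b) = deg a + deg b)
    (hinv : ∀ a : K, a ≠ 0 → deg a⁻¹ = (deg a).map (fun k : ℤ => -k))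
    {n : ℕ} (H J : Matrix (Fin n) (Fin n) K)
    (hHut : ∀ i j : Fin n, j < i → H i j = 0)
    (hHinv : H * J = 1 ∧ J * H = 1)
    (hHpos : ∀ i j : Fin n, H i j = 0 ∨ (0 : WithBot ℤ) ≤ deg (H i j))
    (hHdeg : ∀ i j : Fin n, i < j → deg (H i j) < deg (H j j)) :
    ∀ i j : Fin n, deg (J i j) ≤ (0 : WithBot ℤ) := by
  have deg0 : deg 0 = ⊥ := (hbot 0).mpr rfl
  -- degree of 1 is 0
  have h1 : deg (1 : K) = 0 := by
    have hne : deg (1 : K) ≠ ⊥ := by simp [hbot]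
    obtain ⟨d, hd⟩ := WithBot.ne_bot_iff_exists.mp hne
    have h2 := hmul 1 1
    rw [one_mul, ← hd] at h2
    have h3 : d = d + d := by exact_mod_cast h2
    have h4 : d = 0 := by omega
    rw [← hd, h4]; rfl
  -- degree of -1 is 0
  have hneg1 : deg (-1 : K) = 0 := by
    have hne : deg (-1 : K) ≠ ⊥ := by simp [hbot]
    obtain ⟨d, hd⟩ := WithBot.ne_bot_iff_exists.mp hne
    have h2 := hmul (-1) (-1)
    rw [neg_one_mul, neg_neg, h1, ← hd] at h2
    have h3 : (0 : ℤ) = d + d := by exact_mod_cast h2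
    have h4 : d = 0 := by omega
    rw [← hd, h4]; rfl
  have degneg : ∀ a : K, deg (-a) = deg a := by
    intro a
    rw [← neg_one_mul, hmul, hneg1, zero_add]
  -- degree of a sum
  have degsum : ∀ (s : Finset (Fin n)) (f : Fin n → K) (c : WithBot ℤ),
      (∀ k ∈ s, deg (f k) ≤ c) → deg (∑ k ∈ s, f k) ≤ c := by
    intro s f c
    induction s using Finset.induction_on with
    | empty => intro _; rw [Finset.sum_empty, deg0]; exact bot_le
    | @insert a s hnotmem ih =>
      intro hall
      rw [Finset.sum_insert hnotmem]
      exact le_trans (hadd _ _) (max_le (hall _ (Finset.mem_insert_self _ _))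
        (ih fun k hk => hall k (Finset.mem_insert_of_mem hk)))
  -- J is lower triangular zero, and diagonal facts
  have claimA : ∀ m : ℕ, ∀ j : Fin n, (j : ℕ) = m →
      (∀ i : Fin n, j < i → J i j = 0) ∧ J j j * H j j = 1 := by
    intro m
    induction m using Nat.strong_induction_on with
    | _ m ih =>
      intro j hj
      have key : ∀ i : Fin n, j ≤ i → J i j * H j j = (if i = j then (1 : K) else 0) := by
        intro i hij
        have h2 := congrFun (congrFun hHinv.2 i) j
        rw [Matrix.mul_apply, Matrix.one_apply] at h2
        have hs : (∑ k : Fin n, J i k * H k j) = J i j * H j j := by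
          apply Finset.sum_eq_single
          · intro k _ hk
            rcases lt_or_gt_of_ne hk with hlt | hgt
            · have hk0 : J i k = 0 := by
                have hkm : (k : ℕ) < m := by
                  have := Fin.lt_def.mp hlt; omega
                exact (ih (k : ℕ) hkm k rfl).1 i (lt_of_lt_of_le hlt hij)
              rw [hk0, zero_mul]
            · rw [hHut k j hgt, mul_zero]
          · intro h; exact absurd (Finset.mem_univ j) h
        rw [hs] at h2
        exact h2
      have hdiag : J j j * H j j = 1 := by
        have := key j le_rfl
        simpa using this
      have hne : H j j ≠ 0 := by
        intro h0
        rw [h0, mul_zero] at hdiag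
        exact zero_ne_one hdiag
      refine ⟨fun i hji => ?_, hdiag⟩
      have hk := key i (le_of_lt hji)
      rw [if_neg (Fin.ne_of_gt hji)] at hk
      exact (mul_eq_zero.mp hk).resolve_right hne
  have Jlow : ∀ i j : Fin n, j < i → J i j = 0 := fun i j h => (claimA (j : ℕ) j rfl).1 i h
  have Jdiag : ∀ j : Fin n, J j j * H j j = 1 := fun j => (claimA (j : ℕ) j rfl).2
  have Hdne : ∀ j : Fin n, H j j ≠ 0 := by
    intro j h0
    have := Jdiag j
    rw [h0, mul_zero] at this
    exact zero_ne_one this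
  have Hdd : ∀ j : Fin n, ∃ d : ℤ, deg (H j j) = d ∧ 0 ≤ d := by
    intro j
    have hpos := (hHpos j j).resolve_left (Hdne j)
    have hne : deg (H j j) ≠ ⊥ := fun h => Hdne j ((hbot _).mp h)
    obtain ⟨d, hd⟩ := WithBot.ne_bot_iff_exists.mp hne
    refine ⟨d, hd.symm, ?_⟩
    rw [← hd] at hpos
    exact_mod_cast hpos
  -- main claim: deg (J i j) ≤ - deg (H i i)
  have claimB : ∀ m : ℕ, ∀ i : Fin n, n - (i : ℕ) = m →
      ∀ j : Fin n, deg (J i j) ≤ (deg (H i i)).map (fun k : ℤ => -k) := by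
    intro m
    induction m using Nat.strong_induction_on with
    | _ m ih =>
      intro i hi j
      rcases lt_trichotomy j i with h | h | h
      · rw [Jlow i j h, deg0]; exact bot_le
      · subst h
        have hJ : J j j = (H j j)⁻¹ := eq_inv_of_mul_eq_one_left (Jdiag j)
        rw [hJ, hinv _ (Hdne j)]
      · -- i < j
        have hij : i ≠ j := Fin.ne_of_lt h
        have h2 := congrFun (congrFun hHinv.1 i) j
        rw [Matrix.mul_apply, Matrix.one_apply, if_neg hij] at h2
        have hsplit : H i i * J i j + ∑ k ∈ Finset.univ.erase i, H i k * J k j = 0 :=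
          (Finset.add_sum_erase Finset.univ (fun k => H i k * J k j) (Finset.mem_univ i)).trans h2
        have hJ : J i j = (H i i)⁻¹ * (-(∑ k ∈ Finset.univ.erase i, H i k * J k j)) := by
          have he : H i i * J i j = -(∑ k ∈ Finset.univ.erase i, H i k * J k j) :=
            eq_neg_of_add_eq_zero_left hsplit
          rw [← he, inv_mul_cancel_left₀ (Hdne i)]
        have hsum : deg (∑ k ∈ Finset.univ.erase i, H i k * J k j) ≤ 0 := by
          apply degsum
          intro k hk
          have hki : k ≠ i := Finset.ne_of_mem_erase hk
          rcases lt_or_gt_of_ne hki with hlt | hgt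
          · rw [hHut i k hlt, zero_mul, deg0]; exact bot_le
          · have hkm : n - (k : ℕ) < m := by
              have h1' := Fin.lt_def.mp hgt
              have h2' := k.isLt
              omega
            have hJk : deg (J k j) ≤ (deg (H k k)).map (fun t : ℤ => -t) :=
              ih (n - (k : ℕ)) hkm k rfl j
            obtain ⟨d, hd, hd0⟩ := Hdd k
            rw [hmul]
            calc deg (H i k) + deg (J k j)
                ≤ deg (H k k) + (deg (H k k)).map (fun t : ℤ => -t) :=
                  add_le_add (le_of_lt (hHdeg i k hgt)) hJk
              _ = 0 := by rw [hd, WithBot.map_coe, ← WithBot.coe_add]; norm_num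
        rw [hJ, hmul, hinv _ (Hdne i), degneg]
        calc (deg (H i i)).map (fun k : ℤ => -k) + deg (∑ k ∈ Finset.univ.erase i, H i k * J k j)
            ≤ (deg (H i i)).map (fun k : ℤ => -k) + 0 := add_le_add_right hsum _
          _ = (deg (H i i)).map (fun k : ℤ => -k) := add_zero _
  intro i j
  have hB := claimB (n - (i : ℕ)) i rfl j
  obtain ⟨d, hd, hd0⟩ := Hdd i
  rw [hd, WithBot.map_coe] at hB
  refine hB.trans ?_
  exact_mod_cast neg_nonpos.mpr hd0
end

section
/- Let A ∈ R^{n×n} have full left row rank, let H = U·A be a Hermite form of A with U unimodular, and set h_i = degD H_{ii} for each i. Let L(A) = { b·A : b ∈ R^{1×n} } be the left row module of A, let ℓ ∈ {1,…,n}, and let v = (v_1,…,v_n) ∈ R^{1×n} satisfy v_k = 0 for all k < ℓ and degD v_ℓ < h_ℓ. Then: if v ∈ L(A), then v_ℓ = 0; equivalently, if v_ℓ ≠ 0 then v ∉ L(A). -/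
/-- Let `A ∈ R^{n×n}` have full left row rank with
Hermite form `H = U·A` (`U` unimodular), and let `h_ℓ = degD H_{ℓℓ}`.
If `v ∈ R^{1×n}` has `v_k = 0` for all `k < ℓ` and `degD v_ℓ < h_ℓ`, then
membership of `v` in the left row module `L(A) = { b·A : b ∈ R^{1×n} }`
forces `v_ℓ = 0`. -/
theorem stmt12
    {R : Type*} [Ring R] [Nontrivial R] [NoZeroDivisors R]
    (degD : R → WithBot ℕ)
    (hbot : ∀ r : R, degD r = ⊥ ↔ r = 0)
    (hmul : ∀ r s : R, degD (r * s) = degD r + degD s)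
    (hadd : ∀ r s : R, degD (r + s) ≤ max (degD r) (degD s))
    (hunit : ∀ r : R, degD r = 0 → IsUnit r)
    (hdivision : ∀ f g : R, g ≠ 0 → ∃ q rem : R, f = q * g + rem ∧ degD rem < degD g)
    {n : ℕ} (A U H : Matrix (Fin n) (Fin n) R)
    (hrank : ∀ b : Fin n → R, Matrix.vecMul b A = 0 → b = 0)
    (hUuni : ∃ V : Matrix (Fin n) (Fin n) R, U * V = 1 ∧ V * U = 1)
    (hHut : ∀ i j : Fin n, j < i → H i j = 0)
    (hHdiag : ∀ i : Fin n, H i i ≠ 0)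
    (hHdeg : ∀ i j : Fin n, i < j → degD (H i j) < degD (H j j))
    (hUA : U * A = H)
    (ℓ : Fin n) (v : Fin n → R)
    (hv0 : ∀ k : Fin n, k < ℓ → v k = 0)
    (hvdeg : degD (v ℓ) < degD (H ℓ ℓ)) :
    (∃ b : Fin n → R, v = Matrix.vecMul b A) → v ℓ = 0 := by
  rintro ⟨b, rfl⟩
  obtain ⟨V, hUV, hVU⟩ := hUuni
  set c : Fin n → R := Matrix.vecMul b V with hc
  have hVH : V * H = A := by
    rw [← hUA, ← Matrix.mul_assoc, hVU, Matrix.one_mul]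
  have hvc : Matrix.vecMul b A = Matrix.vecMul c H := by
    rw [hc, Matrix.vecMul_vecMul, hVH]
  -- value of the product at a coordinate
  have hval : ∀ k : Fin n, Matrix.vecMul b A k = ∑ i, c i * H i k := by
    intro k
    rw [hvc]
    rfl
  -- c vanishes below ℓ
  have hc0 : ∀ m : ℕ, ∀ k : Fin n, k.val = m → k < ℓ → c k = 0 := by
    intro m
    induction m using Nat.strong_induction_on with
    | _ m ih =>
      intro k hk hkℓ
      have h0 : (0 : R) = ∑ i, c i * H i k := by
        rw [← hval k, hv0 k hkℓ]
      have hsum : ∑ i, c i * H i k = c k * H k k := by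
        apply Finset.sum_eq_single
        · intro i _ hik
          rcases lt_or_gt_of_ne hik with h | h
          · have := ih i.val (hk ▸ h) i rfl (lt_trans h hkℓ)
            rw [this, zero_mul]
          · rw [hHut i k h, mul_zero]
        · intro h; exact absurd (Finset.mem_univ k) h
      rw [hsum] at h0
      rcases mul_eq_zero.mp h0.symm with h | h
      · exact h
      · exact absurd h (hHdiag k)
  have hcℓ : ∀ i : Fin n, i < ℓ → c i = 0 := fun i hi => hc0 i.val i rfl hi
  -- value at ℓ
  have hvl : Matrix.vecMul b A ℓ = c ℓ * H ℓ ℓ := by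
    rw [hval ℓ]
    apply Finset.sum_eq_single
    · intro i _ hik
      rcases lt_or_gt_of_ne hik with h | h
      · rw [hcℓ i h, zero_mul]
      · rw [hHut i ℓ h, mul_zero]
    · intro h; exact absurd (Finset.mem_univ ℓ) h
  by_contra hne
  have hcl : c ℓ ≠ 0 := by
    intro h; apply hne; rw [hvl, h, zero_mul]
  have hdegc : degD (c ℓ) ≠ ⊥ := fun h => hcl ((hbot _).mp h)
  obtain ⟨m, hm⟩ := WithBot.ne_bot_iff_exists.mp hdegc
  have : degD (H ℓ ℓ) ≤ degD (c ℓ) + degD (H ℓ ℓ) := by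
    calc degD (H ℓ ℓ) = 0 + degD (H ℓ ℓ) := (zero_add _).symm
    _ ≤ degD (c ℓ) + degD (H ℓ ℓ) := by
        apply add_le_add_left
        rw [← hm]
        exact WithBot.coe_le_coe.mpr (Nat.zero_le m)
  have hlt : degD (Matrix.vecMul b A ℓ) < degD (H ℓ ℓ) := hvdeg
  rw [hvl, hmul] at hlt
  exact absurd hlt (not_lt.mpr this)
end

section
/- Suppose there exists ℓ ∈ {1,…,n} such that d_i = h_i for all i < ℓ and d_ℓ < h_ℓ. Then there is no solution T ∈ R^{n×n} for (d_1,…,d_n). -/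
/-- (Infeasibility part of the degree-constraint system.)
With `A ∈ R^{n×n}` of full left row rank, `degD A_{ij} ≤ d`, Hermite form
`H = U·A` with diagonal degrees `h_i = degD H_{ii}`: if there is an index
`ℓ` with `d_i = h_i` for all `i < ℓ` and `d_ℓ < h_ℓ`, then the system (2)
has no solution `T`. -/
theorem stmt14
    {R : Type*} [Ring R] [Nontrivial R] [NoZeroDivisors R]
    (degD : R → WithBot ℕ)
    (hbot : ∀ r : R, degD r = ⊥ ↔ r = 0)
    (hmul : ∀ r s : R, degD (r * s) = degD r + degD s)
    (hadd : ∀ r s : R, degD (r + s) ≤ max (degD r) (degD s))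
    (hunit : ∀ r : R, degD r = 0 → IsUnit r)
    (hdivision : ∀ f g : R, g ≠ 0 → ∃ q rem : R, f = q * g + rem ∧ degD rem < degD g)
    {n : ℕ} (d : ℕ) (A U H : Matrix (Fin n) (Fin n) R)
    (hrank : ∀ b : Fin n → R, Matrix.vecMul b A = 0 → b = 0)
    (hAd : ∀ i j : Fin n, degD (A i j) ≤ ((d : ℕ) : WithBot ℕ))
    (hUuni : ∃ V : Matrix (Fin n) (Fin n) R, U * V = 1 ∧ V * U = 1)
    (hHut : ∀ i j : Fin n, j < i → H i j = 0)
    (hHdiag : ∀ i : Fin n, H i i ≠ 0)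
    (hHdeg : ∀ i j : Fin n, i < j → degD (H i j) < degD (H j j))
    (hUA : U * A = H)
    (h dvec : Fin n → ℕ)
    (hh : ∀ i : Fin n, degD (H i i) = ((h i : ℕ) : WithBot ℕ))
    (ℓ : Fin n)
    (hlt : ∀ i : Fin n, i < ℓ → dvec i = h i)
    (hℓ : dvec ℓ < h ℓ) :
    ¬ ∃ T : Matrix (Fin n) (Fin n) R,
      (∀ i : Fin n, (T * A) i i ≠ 0 ∧ degD ((T * A) i i) = ((dvec i : ℕ) : WithBot ℕ)) ∧
      (∀ i j : Fin n, i ≠ j → degD ((T * A) i j) < ((dvec j : ℕ) : WithBot ℕ)) := by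

  rintro ⟨T, hdiagT, hoffT⟩
  obtain ⟨V, hUV, hVU⟩ := hUuni
  have hA : A = V * H := by
    rw [← hUA, ← Matrix.mul_assoc, hVU, Matrix.one_mul]
  have hTA : T * A = (T * V) * H := by rw [hA, ← Matrix.mul_assoc]
  set S := T * V with hS
  have hnonneg : ∀ r : R, r ≠ 0 → (0 : WithBot ℕ) ≤ degD r := by
    intro r hr
    have : degD r ≠ ⊥ := fun hb => hr ((hbot r).mp hb)
    cases hx : degD r with
    | bot => exact absurd hx this
    | coe a => simp
  have key : ∀ m : ℕ, ∀ k : Fin n, k.val = m → k ≤ ℓ → S ℓ k = 0 := by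
    intro m
    induction m using Nat.strong_induction_on with
    | _ m ih =>
      intro k hkm hkℓ
      have hsum : (T * A) ℓ k = S ℓ k * H k k := by
        rw [hTA, Matrix.mul_apply]
        apply Finset.sum_eq_single k
        · intro j _ hjk
          rcases lt_or_gt_of_ne hjk with hlt' | hgt
          · have hjℓ : j ≤ ℓ := le_trans (le_of_lt hlt') hkℓ
            have : S ℓ j = 0 := ih j.val (hkm ▸ hlt') j rfl hjℓ
            rw [this, zero_mul]
          · rw [hHut j k hgt, mul_zero]
        · intro habs; exact absurd (Finset.mem_univ k) habs
      have hdeglt : degD ((T * A) ℓ k) < degD (H k k) := by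
        rcases eq_or_lt_of_le hkℓ with heq | hltk
        · subst heq
          rw [(hdiagT k).2, hh k]
          exact_mod_cast hℓ
        · have hne : ℓ ≠ k := ne_of_gt hltk
          have := hoffT ℓ k hne
          rw [hlt k hltk] at this
          rw [hh k]
          exact this
      by_contra hSne
      rw [hsum, hmul] at hdeglt
      have h0 : (0 : WithBot ℕ) ≤ degD (S ℓ k) := hnonneg _ hSne
      have : degD (H k k) ≤ degD (S ℓ k) + degD (H k k) := le_add_of_nonneg_left h0
      exact absurd hdeglt (not_lt_of_ge this)
  have hSℓℓ : S ℓ ℓ = 0 := key ℓ.val ℓ rfl le_rfl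
  have hzero : (T * A) ℓ ℓ = 0 := by
    rw [hTA, Matrix.mul_apply]
    apply Finset.sum_eq_zero
    intro j _
    rcases lt_trichotomy j ℓ with hlt' | heq | hgt
    · rw [key j.val j rfl (le_of_lt hlt'), zero_mul]
    · subst heq; rw [hSℓℓ, zero_mul]
    · rw [hHut j ℓ hgt, mul_zero]
  exact (hdiagT ℓ).1 hzero
end
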